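/- arXiv:2602.08471 — 4 statements merged into one kernel-verified Lean document; each statement's English description precedes it below -/
import Mathlib

section
/- For every natural number n ≥ 1, the following identity of polynomials in the variables w and u holds: Σ_{m,k} k · D(n,m,k) w^m u^k = n · Σ_{n_1 + n_2 = n − 1} C(n−1, n_1) (1+w)^{n_1 n_2} · u · (Σ_{m_1,k_1} D(n_1,m_1,k_1) w^{m_1} u^{k_1}) · (Σ_{m_2,k_2} D(n_2,m_2,k_2) w^{m_2 + k_2} (1+w)^{n_2 − k_2}). (This is the coefficient-wise combinatorial form of the peeling-process identity.) -/
/-- A finite labelled digraph (edge set on `Fin n`) is acyclic if the transitive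
closure of its edge relation is irreflexive. -/
def DAcyclic {n : ℕ} (E : Finset (Fin n × Fin n)) : Prop :=
  Irreflexive (Relation.TransGen fun a b => (a, b) ∈ E)

/-- Sources of a digraph: vertices with no incoming edge. -/
def dagSources {n : ℕ} (E : Finset (Fin n × Fin n)) : Finset (Fin n) :=
  Finset.univ.filter fun v => ∀ u, (u, v) ∉ E

open Classical in
/-- `Dcount n m k` = number of labelled DAGs on `n` vertices with `m` edges and
exactly `k` sources. -/
noncomputable def Dcount (n m k : ℕ) : ℕ :=
  (Finset.univ.filter fun E : Finset (Fin n × Fin n) =>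
    DAcyclic E ∧ E.card = m ∧ (dagSources E).card = k).card

open Classical in
/-- `DcountE n m` = number of labelled DAGs on `n` vertices with `m` edges. -/
noncomputable def DcountE (n m : ℕ) : ℕ :=
  (Finset.univ.filter fun E : Finset (Fin n × Fin n) =>
    DAcyclic E ∧ E.card = m).card

open Finset Relation

namespace Peeling

attribute [local instance 10] Classical.propDecidable

/-- Acyclicity for digraphs on an arbitrary vertex type. -/
def Acy {α : Type*} (E : Finset (α × α)) : Prop :=
  Irreflexive (Relation.TransGen fun a b => (a, b) ∈ E)

/-- Sources for digraphs on an arbitrary fintype. -/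
noncomputable def gsrc {α : Type*} [Fintype α] (E : Finset (α × α)) : Finset α :=
  Finset.univ.filter fun v => ∀ u, (u, v) ∉ E

/-- Weighted count of DAGs on a fintype. -/
noncomputable def dagW (α : Type*) [Fintype α] (f : ℕ → ℕ → ℝ) : ℝ :=
  ∑ E ∈ Finset.univ.filter (fun E : Finset (α × α) => Acy E), f E.card (gsrc E).card

lemma acy_mono {α : Type*} {E E' : Finset (α × α)} (h : Acy E) (hsub : E' ⊆ E) : Acy E' :=
  fun x hx => h x (Relation.TransGen.mono (fun _ _ hab => hsub hab) x x hx)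

lemma acy_map_iff {α β : Type*} (g : α ↪ β) (E : Finset (α × α)) :
    Acy (E.map (g.prodMap g)) ↔ Acy E := by
  constructor
  · intro h a ha
    refine h (g a) ?_
    refine Relation.TransGen.lift g (fun x y hxy => ?_) a a ha
    have : (g.prodMap g) (x, y) ∈ E.map (g.prodMap g) := Finset.mem_map_of_mem _ hxy
    exact this
  · intro h x hx
    have hne : Nonempty α := by
      rcases (Relation.TransGen.tail'_iff.1 hx) with ⟨b, _, hbx⟩
      rcases Finset.mem_map.1 hbx with ⟨p, _, _⟩
      exact ⟨p.1⟩
    set f : β → α := Function.invFun g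
    have hf : ∀ a, f (g a) = a := fun a => Function.leftInverse_invFun g.injective a
    have hx' : Relation.TransGen (fun a b => (a, b) ∈ E) (f x) (f x) := by
      refine Relation.TransGen.lift f (fun a b hab => ?_) x x hx
      rcases Finset.mem_map.1 hab with ⟨p, hp, hpe⟩
      have h1 : g p.1 = a := congrArg Prod.fst hpe
      have h2 : g p.2 = b := congrArg Prod.snd hpe
      rw [← h1, ← h2, Function.onFun, hf, hf]
      exact hp
    exact h _ hx'

lemma mem_src_map {α β : Type*} (g : α ↪ β) (E : Finset (α × α)) (a : α) :
    (∀ u, (u, g a) ∉ E.map (g.prodMap g)) ↔ (∀ u, (u, a) ∉ E) := by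
  constructor
  · intro h u hu
    refine h (g u) ?_
    have : (g.prodMap g) (u, a) ∈ E.map (g.prodMap g) := Finset.mem_map_of_mem _ hu
    simpa using this
  · intro h u hu
    rcases Finset.mem_map.1 hu with ⟨p, hp, hpe⟩
    have h2 : g p.2 = g a := congrArg Prod.snd hpe
    have : p.2 = a := g.injective h2
    exact h p.1 (by rw [← this]; exact hp)

lemma gsrc_map {α β : Type*} [Fintype α] [Fintype β] (e : α ≃ β) (E : Finset (α × α)) :
    gsrc (E.map (e.toEmbedding.prodMap e.toEmbedding)) = (gsrc E).map e.toEmbedding := by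
  ext b
  constructor
  · intro hbs
    have h : ∀ u, (u, b) ∉ E.map (e.toEmbedding.prodMap e.toEmbedding) := by
      simpa [gsrc] using hbs
    have hmem : e.symm b ∈ gsrc E := by
      simp only [gsrc, Finset.mem_filter, Finset.mem_univ, true_and]
      exact (mem_src_map e.toEmbedding E (e.symm b)).1 (by simpa using h)
    exact Finset.mem_map.2 ⟨e.symm b, hmem, e.apply_symm_apply b⟩
  · intro hb
    rcases Finset.mem_map.1 hb with ⟨a, ha, rfl⟩
    have ha' : ∀ u, (u, a) ∉ E := by simpa [gsrc] using ha
    simp only [gsrc, Finset.mem_filter, Finset.mem_univ, true_and]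
    exact (mem_src_map e.toEmbedding E a).2 ha'

lemma dagW_congr {α β : Type*} [Fintype α] [Fintype β] (e : α ≃ β) (f : ℕ → ℕ → ℝ) :
    dagW α f = dagW β f := by
  unfold dagW
  refine Finset.sum_nbij' (i := fun E => E.map (e.toEmbedding.prodMap e.toEmbedding))
    (j := fun E => E.map (e.symm.toEmbedding.prodMap e.symm.toEmbedding)) ?_ ?_ ?_ ?_ ?_
  · intro E hE
    simp only [Finset.mem_filter, Finset.mem_univ, true_and] at hE ⊢
    exact (acy_map_iff _ _).2 hE
  · intro E hE
    simp only [Finset.mem_filter, Finset.mem_univ, true_and] at hE ⊢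
    exact (acy_map_iff _ _).2 hE
  · intro E _
    rw [Finset.map_map]
    have h : (e.toEmbedding.prodMap e.toEmbedding).trans
        (e.symm.toEmbedding.prodMap e.symm.toEmbedding) = Function.Embedding.refl _ := by
      ext ⟨a, b⟩ <;>
      simp [Prod.map]
    rw [h, Finset.map_refl]
  · intro E _
    rw [Finset.map_map]
    have h : (e.symm.toEmbedding.prodMap e.symm.toEmbedding).trans
        (e.toEmbedding.prodMap e.toEmbedding) = Function.Embedding.refl _ := by
      ext ⟨a, b⟩ <;>
      simp [Prod.map]
    rw [h, Finset.map_refl]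
  · intro E _
    rw [Finset.card_map, gsrc_map, Finset.card_map]

lemma sum_fiber_card {β : Type*} (s : Finset β) (key : β → ℕ × ℕ) (t : Finset (ℕ × ℕ))
    (h : ∀ b ∈ s, key b ∈ t) (f : ℕ × ℕ → ℝ) :
    ∑ p ∈ t, ((s.filter fun b => key b = p).card : ℝ) * f p = ∑ b ∈ s, f (key b) := by
  rw [← Finset.sum_fiberwise_of_maps_to h (fun b => f (key b))]
  refine Finset.sum_congr rfl fun p hp => ?_
  have : ∀ b ∈ s.filter fun b => key b = p, f (key b) = f p := by
    intro b hb
    rw [(Finset.mem_filter.1 hb).2]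
  rw [Finset.sum_congr rfl this, Finset.sum_const, nsmul_eq_mul]

lemma dacyclic_eq_acy {n : ℕ} (E : Finset (Fin n × Fin n)) : DAcyclic E ↔ Acy E := Iff.rfl

lemma dagSources_eq_gsrc {n : ℕ} (E : Finset (Fin n × Fin n)) : dagSources E = gsrc E := by
  unfold dagSources gsrc
  congr 1

lemma Dcount_eq_card_fiber (n m k : ℕ) :
    Dcount n m k = ((Finset.univ.filter fun E : Finset (Fin n × Fin n) => Acy E).filter
      (fun E => (E.card, (gsrc E).card) = (m, k))).card := by
  rw [Dcount, Finset.filter_filter]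
  congr 1
  apply Finset.filter_congr
  intro E _
  rw [dagSources_eq_gsrc, Prod.mk.injEq]
  exact ⟨fun ⟨h1, h2, h3⟩ => ⟨h1, h2, h3⟩, fun ⟨h1, h2, h3⟩ => ⟨h1, h2, h3⟩⟩

lemma Dcount_eq_zero {n m k : ℕ} (h : ¬ (m ≤ n * n ∧ k ≤ n)) : Dcount n m k = 0 := by
  rw [Dcount, Finset.card_eq_zero, Finset.filter_eq_empty_iff]
  intro E _
  rintro ⟨_, hm, hk⟩
  refine h ⟨?_, ?_⟩
  · rw [← hm]
    calc E.card ≤ Fintype.card (Fin n × Fin n) := Finset.card_le_univ E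
    _ = n * n := by simp
  · rw [← hk]
    calc (dagSources E).card ≤ Fintype.card (Fin n) := Finset.card_le_univ _
    _ = n := by simp

lemma tsum_Dcount (n : ℕ) (g : ℕ → ℕ → ℝ) :
    ∑' p : ℕ × ℕ, (Dcount n p.1 p.2 : ℝ) * g p.1 p.2 = dagW (Fin n) g := by
  rw [tsum_eq_sum (s := Finset.range (n * n + 1) ×ˢ Finset.range (n + 1))
    (by
      intro p hp
      have : Dcount n p.1 p.2 = 0 := by
        apply Dcount_eq_zero
        intro ⟨h1, h2⟩
        exact hp (Finset.mem_product.2 ⟨Finset.mem_range.2 (Nat.lt_succ_of_le h1),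
          Finset.mem_range.2 (Nat.lt_succ_of_le h2)⟩)
      rw [this]
      simp)]
  unfold dagW
  rw [← sum_fiber_card (Finset.univ.filter fun E : Finset (Fin n × Fin n) => Acy E)
    (fun E => (E.card, (gsrc E).card)) (Finset.range (n * n + 1) ×ˢ Finset.range (n + 1))
    (by
      intro E _
      refine Finset.mem_product.2 ⟨Finset.mem_range.2 (Nat.lt_succ_of_le ?_),
        Finset.mem_range.2 (Nat.lt_succ_of_le ?_)⟩
      · calc E.card ≤ Fintype.card (Fin n × Fin n) := Finset.card_le_univ E
        _ = n * n := by simp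
      · calc (gsrc E).card ≤ Fintype.card (Fin n) := Finset.card_le_univ _
        _ = n := by simp)
    (fun p => g p.1 p.2)]
  refine Finset.sum_congr rfl fun p _ => ?_
  rw [Dcount_eq_card_fiber]

/-- Sources within a subset. -/
noncomputable def srcIn {n : ℕ} (S : Finset (Fin n)) (E : Finset (Fin n × Fin n)) :
    Finset (Fin n) := S.filter fun v => ∀ u, (u, v) ∉ E

/-- DAGs supported on a subset `S`. -/
noncomputable def dagOnS {n : ℕ} (S : Finset (Fin n)) : Finset (Finset (Fin n × Fin n)) :=
  Finset.univ.filter (fun E => DAcyclic E ∧ E ⊆ S ×ˢ S)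

section Subset

variable {n : ℕ} (S : Finset (Fin n))

private def ι : ↥S ↪ Fin n := Function.Embedding.subtype _

lemma coe_iota_prodMap (p : ↥S × ↥S) :
    ((ι S).prodMap (ι S)) p = ((p.1 : Fin n), (p.2 : Fin n)) := rfl

lemma hinj_val : Function.Injective (Prod.map (Subtype.val : ↥S → Fin n) (Subtype.val : ↥S → Fin n)) :=
  Function.Injective.prodMap Subtype.val_injective Subtype.val_injective

lemma map_preimage_eq {E : Finset (Fin n × Fin n)} (hsub : E ⊆ S ×ˢ S) :
    (E.preimage (Prod.map (Subtype.val : ↥S → Fin n) (Subtype.val : ↥S → Fin n))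
      (hinj_val S).injOn).map ((ι S).prodMap (ι S)) = E := by
  ext ⟨a, b⟩
  constructor
  · intro h
    rcases Finset.mem_map.1 h with ⟨p, hp, hpe⟩
    rw [Finset.mem_preimage] at hp
    rw [← hpe]
    exact hp
  · intro h
    have ha : a ∈ S := (Finset.mem_product.1 (hsub h)).1
    have hb : b ∈ S := (Finset.mem_product.1 (hsub h)).2
    exact Finset.mem_map.2 ⟨(⟨a, ha⟩, ⟨b, hb⟩), Finset.mem_preimage.2 h, rfl⟩

lemma srcIn_map (E' : Finset (↥S × ↥S)) :
    srcIn S (E'.map ((ι S).prodMap (ι S))) = (gsrc E').map (ι S) := by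
  ext v
  constructor
  · intro h
    rcases Finset.mem_filter.1 h with ⟨hv, hsrc⟩
    refine Finset.mem_map.2 ⟨⟨v, hv⟩, ?_, rfl⟩
    simp only [gsrc, Finset.mem_filter, Finset.mem_univ, true_and]
    exact (mem_src_map (ι S) E' ⟨v, hv⟩).1 hsrc
  · intro h
    rcases Finset.mem_map.1 h with ⟨a, ha, rfl⟩
    have ha' : ∀ u, (u, a) ∉ E' := by simpa [gsrc] using ha
    refine Finset.mem_filter.2 ⟨a.2, (mem_src_map (ι S) E' a).2 ha'⟩

lemma sum_dagOnS (f : ℕ → ℕ → ℝ) :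
    ∑ E ∈ dagOnS S, f E.card (srcIn S E).card = dagW (↥S) f := by
  unfold dagOnS dagW
  refine Finset.sum_nbij'
    (i := fun E => E.preimage (Prod.map (Subtype.val : ↥S → Fin n) (Subtype.val : ↥S → Fin n))
      (hinj_val S).injOn)
    (j := fun E' => E'.map ((ι S).prodMap (ι S))) ?_ ?_ ?_ ?_ ?_
  · intro E hE
    rcases Finset.mem_filter.1 hE with ⟨_, hacy, hsub⟩
    simp only [Finset.mem_filter, Finset.mem_univ, true_and]
    have := (acy_map_iff (ι S)
      (E.preimage (Prod.map (Subtype.val : ↥S → Fin n) (Subtype.val : ↥S → Fin n)) (hinj_val S).injOn))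
    rw [map_preimage_eq S hsub] at this
    exact this.1 hacy
  · intro E' hE'
    simp only [Finset.mem_filter, Finset.mem_univ, true_and] at hE' ⊢
    constructor
    · exact (acy_map_iff _ _).2 hE'
    · intro p hp
      rcases Finset.mem_map.1 hp with ⟨q, _, rfl⟩
      exact Finset.mem_product.2 ⟨q.1.2, q.2.2⟩
  · intro E hE
    rcases Finset.mem_filter.1 hE with ⟨_, _, hsub⟩
    exact map_preimage_eq S hsub
  · intro E' _
    ext p
    rw [Finset.mem_preimage]
    exact Finset.mem_map' _
  · intro E hE
    rcases Finset.mem_filter.1 hE with ⟨_, _, hsub⟩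
    have h1 : ((E.preimage (Prod.map (Subtype.val : ↥S → Fin n) (Subtype.val : ↥S → Fin n))
        (hinj_val S).injOn).map ((ι S).prodMap (ι S))) = E := map_preimage_eq S hsub
    conv_lhs => rw [← h1]
    rw [Finset.card_map, srcIn_map, Finset.card_map]

lemma sum_dagOnS_fin (f : ℕ → ℕ → ℝ) :
    ∑ E ∈ dagOnS S, f E.card (srcIn S E).card = dagW (Fin S.card) f := by
  rw [sum_dagOnS, dagW_congr S.equivFin]

end Subset

lemma sum_powerset_pow {γ : Type*} [DecidableEq γ] (s : Finset γ) (x : ℝ) :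
    ∑ t ∈ s.powerset, x ^ t.card = (x + 1) ^ s.card := by
  have h := Finset.prod_add (fun _ : γ => x) (fun _ : γ => (1 : ℝ)) s
  simp only [Finset.prod_const, Finset.prod_const_one, mul_one, one_pow] at h
  rw [← h]

lemma sum_powerset_between {γ : Type*} [DecidableEq γ] {a s : Finset γ} (ha : a ⊆ s) (x : ℝ) :
    ∑ H ∈ s.powerset.filter (fun H => a ⊆ H), x ^ H.card
      = x ^ a.card * (x + 1) ^ (s.card - a.card) := by
  have key : ∑ H ∈ s.powerset.filter (fun H => a ⊆ H), x ^ H.card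
      = ∑ K ∈ (s \ a).powerset, x ^ (K.card + a.card) := by
    refine Finset.sum_nbij' (i := fun H => H \ a) (j := fun K => K ∪ a) ?_ ?_ ?_ ?_ ?_
    · intro H hH
      rcases Finset.mem_filter.1 hH with ⟨hHs, haH⟩
      exact Finset.mem_powerset.2 (Finset.sdiff_subset_sdiff (Finset.mem_powerset.1 hHs)
        Finset.Subset.rfl)
    · intro K hK
      have hKs : K ⊆ s \ a := Finset.mem_powerset.1 hK
      refine Finset.mem_filter.2 ⟨Finset.mem_powerset.2 ?_, Finset.subset_union_right⟩
      exact Finset.union_subset (hKs.trans (Finset.sdiff_subset)) ha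
    · intro H hH
      exact Finset.sdiff_union_of_subset (Finset.mem_filter.1 hH).2
    · intro K hK
      have hKs : K ⊆ s \ a := Finset.mem_powerset.1 hK
      have hdisj : Disjoint K a := Finset.sdiff_disjoint.mono_left hKs
      exact Finset.union_sdiff_cancel_right hdisj
    · intro H hH
      rcases Finset.mem_filter.1 hH with ⟨_, haH⟩
      have hle : a.card ≤ H.card := Finset.card_le_card haH
      rw [Finset.card_sdiff_of_subset haH, Nat.sub_add_cancel hle]
  rw [key]
  have : ∀ K ∈ (s \ a).powerset, x ^ (K.card + a.card) = x ^ a.card * x ^ K.card := by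
    intro K _
    rw [pow_add, mul_comm]
  rw [Finset.sum_congr rfl this, ← Finset.mul_sum, sum_powerset_pow, Finset.card_sdiff_of_subset ha]

/-- Set of vertices reachable from `v` by a nonempty directed path. -/
noncomputable def reachSet {n : ℕ} (E : Finset (Fin n × Fin n)) (v : Fin n) :
    Finset (Fin n) := Finset.univ.filter fun x => Relation.TransGen (fun a b => (a, b) ∈ E) v x

section Main

variable {n : ℕ} {v : Fin n} {S1 S2 : Finset (Fin n)}

lemma jfacts (hv1 : v ∉ S1) (hv2 : v ∉ S2) (h12 : Disjoint S1 S2)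
    (hcov : ∀ x : Fin n, x = v ∨ x ∈ S1 ∨ x ∈ S2)
    (E1 E2 F : Finset (Fin n × Fin n)) (H : Finset (Fin n))
    (E : Finset (Fin n × Fin n)) (hE : E = E1 ∪ E2 ∪ F ∪ H.image (fun x => (v, x)))
    (hE1a : DAcyclic E1) (hE1s : E1 ⊆ S1 ×ˢ S1)
    (hE2a : DAcyclic E2) (hE2s : E2 ⊆ S2 ×ˢ S2)
    (hFs : F ⊆ S1 ×ˢ S2) (hHs : H ⊆ S2) (hsH : srcIn S2 E2 ⊆ H) :
    DAcyclic E ∧ v ∈ dagSources E ∧ reachSet E v = S2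
      ∧ dagSources E = insert v (srcIn S1 E1)
      ∧ E.card = E1.card + E2.card + F.card + H.card
      ∧ E.filter (fun p => p.1 ∈ S1 ∧ p.2 ∈ S1) = E1
      ∧ E.filter (fun p => p.1 ∈ S2 ∧ p.2 ∈ S2) = E2
      ∧ E.filter (fun p => p.1 ∈ S1 ∧ p.2 ∈ S2) = F
      ∧ S2.filter (fun x => (v, x) ∈ E) = H := by
  have hmem : ∀ p : Fin n × Fin n,
      p ∈ E ↔ p ∈ E1 ∨ p ∈ E2 ∨ p ∈ F ∨ (p.1 = v ∧ p.2 ∈ H) := by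
    intro p
    rw [hE]
    simp only [Finset.mem_union, Finset.mem_image]
    constructor
    · rintro (((h | h) | h) | ⟨x, hx, rfl⟩)
      · exact Or.inl h
      · exact Or.inr (Or.inl h)
      · exact Or.inr (Or.inr (Or.inl h))
      · exact Or.inr (Or.inr (Or.inr ⟨rfl, hx⟩))
    · rintro (h | h | h | ⟨h1, h2⟩)
      · exact Or.inl (Or.inl (Or.inl h))
      · exact Or.inl (Or.inl (Or.inr h))
      · exact Or.inl (Or.inr h)
      · exact Or.inr ⟨p.2, h2, by rw [← h1]⟩
  have hcls : ∀ p ∈ E,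
      (p.1 ∈ S1 ∧ p.2 ∈ S1 ∧ p ∈ E1) ∨ (p.1 ∈ S2 ∧ p.2 ∈ S2 ∧ p ∈ E2)
        ∨ (p.1 ∈ S1 ∧ p.2 ∈ S2 ∧ p ∈ F) ∨ (p.1 = v ∧ p.2 ∈ H) := by
    intro p hp
    rcases (hmem p).1 hp with h | h | h | h
    · have h' := Finset.mem_product.1 (hE1s h); exact Or.inl ⟨h'.1, h'.2, h⟩
    · have h' := Finset.mem_product.1 (hE2s h); exact Or.inr (Or.inl ⟨h'.1, h'.2, h⟩)
    · have h' := Finset.mem_product.1 (hFs h); exact Or.inr (Or.inr (Or.inl ⟨h'.1, h'.2, h⟩))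
    · exact Or.inr (Or.inr (Or.inr h))
  have hnv : ∀ a, (a, v) ∉ E := by
    intro a hav
    rcases hcls (a, v) hav with ⟨_, h, _⟩ | ⟨_, h, _⟩ | ⟨_, h, _⟩ | ⟨_, h⟩
    · exact hv1 h
    · exact hv2 h
    · exact hv2 h
    · exact hv2 (hHs h)
  have hS2out : ∀ a b, (a, b) ∈ E → a ∈ S2 → (a, b) ∈ E2 ∧ b ∈ S2 := by
    intro a b hab ha
    rcases hcls (a, b) hab with ⟨h1, _, _⟩ | ⟨_, h2, h3⟩ | ⟨h1, _, _⟩ | ⟨h1, _⟩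
    · exact (Finset.disjoint_left.1 h12 h1 ha).elim
    · exact ⟨h3, h2⟩
    · exact (Finset.disjoint_left.1 h12 h1 ha).elim
    · exact absurd (h1 ▸ ha) hv2
  have hS1in : ∀ a b, (a, b) ∈ E → b ∈ S1 → (a, b) ∈ E1 ∧ a ∈ S1 := by
    intro a b hab hb
    rcases hcls (a, b) hab with ⟨h1, _, h3⟩ | ⟨_, h2, _⟩ | ⟨_, h2, _⟩ | ⟨_, h2⟩
    · exact ⟨h3, h1⟩
    · exact (Finset.disjoint_left.1 h12 hb h2).elim
    · exact (Finset.disjoint_left.1 h12 hb h2).elim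
    · exact (Finset.disjoint_left.1 h12 hb (hHs h2)).elim
  have hvout : ∀ b, (v, b) ∈ E → b ∈ H := by
    intro b hvb
    rcases hcls (v, b) hvb with ⟨h1, _, _⟩ | ⟨h1, _, _⟩ | ⟨h1, _, _⟩ | ⟨_, h2⟩
    · exact (hv1 h1).elim
    · exact (hv2 h1).elim
    · exact (hv1 h1).elim
    · exact h2
  have hE2tgt : ∀ a b, Relation.TransGen (fun x y => (x, y) ∈ E2) a b → b ∈ S2 := by
    intro a b h
    rcases Relation.TransGen.tail'_iff.1 h with ⟨c, _, hcb⟩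
    exact (Finset.mem_product.1 (hE2s hcb)).2
  have hT2 : ∀ a b, Relation.TransGen (fun x y => (x, y) ∈ E) a b → a ∈ S2 →
      Relation.TransGen (fun x y => (x, y) ∈ E2) a b := by
    intro a b h
    induction h with
    | single hab => exact fun ha => Relation.TransGen.single (hS2out _ _ hab ha).1
    | tail h hbc ih =>
        intro ha
        have h2 := ih ha
        exact h2.tail (hS2out _ _ hbc (hE2tgt _ _ h2)).1
  have hT1 : ∀ a b, Relation.TransGen (fun x y => (x, y) ∈ E) a b → b ∈ S1 →
      Relation.TransGen (fun x y => (x, y) ∈ E1) a b := by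
    intro a b h
    induction h with
    | single hab => exact fun hb => Relation.TransGen.single (hS1in _ _ hab hb).1
    | tail h hbc ih =>
        intro hc
        exact (ih (hS1in _ _ hbc hc).2).tail (hS1in _ _ hbc hc).1
  have hacy : DAcyclic E := by
    intro x hx
    rcases hcov x with rfl | hx1 | hx2
    · rcases Relation.TransGen.tail'_iff.1 hx with ⟨b, _, hbv⟩
      exact hnv b hbv
    · exact hE1a x (hT1 x x hx hx1)
    · exact hE2a x (hT2 x x hx hx2)
  have hvsrc : v ∈ dagSources E := by
    simp only [dagSources, Finset.mem_filter, Finset.mem_univ, true_and]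
    exact hnv
  have hreach1 : ∀ x, Relation.TransGen (fun a b => (a, b) ∈ E) v x → x ∈ S2 := by
    intro x h
    induction h with
    | single hvb => exact hHs (hvout _ hvb)
    | tail h hbc ih => exact (hS2out _ _ hbc ih).2
  have hwf : WellFounded (fun a b : Fin n => (a, b) ∈ E2) := by
    haveI : IsTrans (Fin n) (Relation.TransGen (fun a b : Fin n => (a, b) ∈ E2)) :=
      ⟨fun _ _ _ => Relation.TransGen.trans⟩
    haveI : IsIrrefl (Fin n) (Relation.TransGen (fun a b : Fin n => (a, b) ∈ E2)) := ⟨hE2a⟩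
    exact Subrelation.wf (fun h => Relation.TransGen.single h)
      (Finite.wellFounded_of_trans_of_irrefl
        (Relation.TransGen (fun a b : Fin n => (a, b) ∈ E2)))
  have hreach2 : ∀ x, x ∈ S2 → Relation.TransGen (fun a b => (a, b) ∈ E) v x := by
    intro x
    refine WellFounded.induction hwf
      (C := fun x => x ∈ S2 → Relation.TransGen (fun a b => (a, b) ∈ E) v x) x ?_
    intro x ih hx
    by_cases hsx : ∀ z, (z, x) ∉ E2
    · have hxH : x ∈ H := hsH (Finset.mem_filter.2 ⟨hx, hsx⟩)
      exact Relation.TransGen.single ((hmem (v, x)).2 (Or.inr (Or.inr (Or.inr ⟨rfl, hxH⟩))))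
    · push_neg at hsx
      rcases hsx with ⟨z, hz⟩
      have hz2 : z ∈ S2 := (Finset.mem_product.1 (hE2s hz)).1
      exact (ih z hz hz2).tail ((hmem (z, x)).2 (Or.inr (Or.inl hz)))
  have hreach : reachSet E v = S2 := by
    ext x
    simp only [reachSet, Finset.mem_filter, Finset.mem_univ, true_and]
    exact ⟨hreach1 x, hreach2 x⟩
  have hsrcE : dagSources E = insert v (srcIn S1 E1) := by
    ext x
    simp only [dagSources, Finset.mem_filter, Finset.mem_univ, true_and, Finset.mem_insert]
    constructor
    · intro h
      rcases hcov x with rfl | hx1 | hx2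
      · exact Or.inl rfl
      · refine Or.inr (Finset.mem_filter.2 ⟨hx1, fun a ha => ?_⟩)
        exact h a ((hmem (a, x)).2 (Or.inl ha))
      · exfalso
        rcases Relation.TransGen.tail'_iff.1 (hreach2 x hx2) with ⟨b, _, hbx⟩
        exact h b hbx
    · rintro (rfl | hx)
      · exact hnv
      · rcases Finset.mem_filter.1 hx with ⟨hx1, hsrc⟩
        exact fun a ha => hsrc a (hS1in a x ha hx1).1
  have hcard : E.card = E1.card + E2.card + F.card + H.card := by
    have d1 : Disjoint E1 E2 := by
      rw [Finset.disjoint_left]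
      intro p hp1 hp2
      exact Finset.disjoint_left.1 h12 (Finset.mem_product.1 (hE1s hp1)).1
        (Finset.mem_product.1 (hE2s hp2)).1
    have d2 : Disjoint (E1 ∪ E2) F := by
      rw [Finset.disjoint_left]
      intro p hp hpF
      rcases Finset.mem_union.1 hp with h | h
      · exact Finset.disjoint_left.1 h12 (Finset.mem_product.1 (hE1s h)).2
          (Finset.mem_product.1 (hFs hpF)).2
      · exact Finset.disjoint_left.1 h12 (Finset.mem_product.1 (hFs hpF)).1
          (Finset.mem_product.1 (hE2s h)).1
    have d3 : Disjoint (E1 ∪ E2 ∪ F) (H.image (fun x => (v, x))) := by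
      rw [Finset.disjoint_right]
      intro p hpI hpU
      rcases Finset.mem_image.1 hpI with ⟨x, hx, rfl⟩
      rcases Finset.mem_union.1 hpU with h | h
      · rcases Finset.mem_union.1 h with h' | h'
        · exact hv1 (Finset.mem_product.1 (hE1s h')).1
        · exact hv2 (Finset.mem_product.1 (hE2s h')).1
      · exact hv1 (Finset.mem_product.1 (hFs h)).1
    have himg : (H.image (fun x => (v, x))).card = H.card :=
      Finset.card_image_of_injective _ (fun a b hab => by
        simpa using congrArg Prod.snd hab)
    rw [hE, Finset.card_union_of_disjoint d3, Finset.card_union_of_disjoint d2,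
      Finset.card_union_of_disjoint d1, himg]
  have hc1 : E.filter (fun p => p.1 ∈ S1 ∧ p.2 ∈ S1) = E1 := by
    ext p
    rw [Finset.mem_filter]
    constructor
    · rintro ⟨hp, h1, h2⟩
      rcases hcls p hp with ⟨_, _, h⟩ | ⟨hq, _, _⟩ | ⟨_, hq, _⟩ | ⟨_, hq⟩
      · exact h
      · exact (Finset.disjoint_left.1 h12 h1 hq).elim
      · exact (Finset.disjoint_left.1 h12 h2 hq).elim
      · exact (Finset.disjoint_left.1 h12 h2 (hHs hq)).elim
    · intro hp
      have h' := Finset.mem_product.1 (hE1s hp)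
      exact ⟨(hmem p).2 (Or.inl hp), h'.1, h'.2⟩
  have hc2 : E.filter (fun p => p.1 ∈ S2 ∧ p.2 ∈ S2) = E2 := by
    ext p
    rw [Finset.mem_filter]
    constructor
    · rintro ⟨hp, h1, h2⟩
      rcases hcls p hp with ⟨hq, _, _⟩ | ⟨_, _, h⟩ | ⟨hq, _, _⟩ | ⟨hq, _⟩
      · exact (Finset.disjoint_left.1 h12 hq h1).elim
      · exact h
      · exact (Finset.disjoint_left.1 h12 hq h1).elim
      · exact absurd (hq ▸ h1) hv2
    · intro hp
      have h' := Finset.mem_product.1 (hE2s hp)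
      exact ⟨(hmem p).2 (Or.inr (Or.inl hp)), h'.1, h'.2⟩
  have hc3 : E.filter (fun p => p.1 ∈ S1 ∧ p.2 ∈ S2) = F := by
    ext p
    rw [Finset.mem_filter]
    constructor
    · rintro ⟨hp, h1, h2⟩
      rcases hcls p hp with ⟨_, hq, _⟩ | ⟨hq, _, _⟩ | ⟨_, _, h⟩ | ⟨hq, _⟩
      · exact (Finset.disjoint_left.1 h12 hq h2).elim
      · exact (Finset.disjoint_left.1 h12 h1 hq).elim
      · exact h
      · exact absurd (hq ▸ h1) hv1
    · intro hp
      have h' := Finset.mem_product.1 (hFs hp)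
      exact ⟨(hmem p).2 (Or.inr (Or.inr (Or.inl hp))), h'.1, h'.2⟩
  have hc4 : S2.filter (fun x => (v, x) ∈ E) = H := by
    ext x
    rw [Finset.mem_filter]
    constructor
    · rintro ⟨_, hvx⟩
      exact hvout x hvx
    · intro hx
      exact ⟨hHs hx, (hmem (v, x)).2 (Or.inr (Or.inr (Or.inr ⟨rfl, hx⟩)))⟩
  exact ⟨hacy, hvsrc, hreach, hsrcE, hcard, hc1, hc2, hc3, hc4⟩

lemma ifacts (hv1 : v ∉ S1) (hv2 : v ∉ S2) (h12 : Disjoint S1 S2)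
    (hcov : ∀ x : Fin n, x = v ∨ x ∈ S1 ∨ x ∈ S2)
    (E : Finset (Fin n × Fin n)) (hacy : DAcyclic E)
    (hvsrc : ∀ u, (u, v) ∉ E) (hreach : reachSet E v = S2) :
    srcIn S2 (E.filter (fun p => p.1 ∈ S2 ∧ p.2 ∈ S2)) ⊆ S2.filter (fun x => (v, x) ∈ E)
      ∧ E.filter (fun p => p.1 ∈ S1 ∧ p.2 ∈ S1) ∪ E.filter (fun p => p.1 ∈ S2 ∧ p.2 ∈ S2)
          ∪ E.filter (fun p => p.1 ∈ S1 ∧ p.2 ∈ S2)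
          ∪ (S2.filter (fun x => (v, x) ∈ E)).image (fun x => (v, x)) = E := by
  have hTmem : ∀ x, x ∈ S2 ↔ Relation.TransGen (fun a b => (a, b) ∈ E) v x := by
    intro x
    rw [← hreach]
    simp [reachSet]
  have hf3 : ∀ p ∈ E, (p.1 = v ∨ p.1 ∈ S2) → p.2 ∈ S2 := by
    intro p hp h
    rcases h with h | h
    · refine (hTmem p.2).2 (Relation.TransGen.single ?_)
      have : (p.1, p.2) ∈ E := hp
      rwa [h] at this
    · exact (hTmem p.2).2 (((hTmem p.1).1 h).tail hp)
  have hf5 : ∀ x ∈ S2, (v, x) ∈ E ∨ ∃ y ∈ S2, (y, x) ∈ E := by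
    intro x hx
    rcases Relation.TransGen.tail'_iff.1 ((hTmem x).1 hx) with ⟨b, hrt, hbx⟩
    rcases Relation.reflTransGen_iff_eq_or_transGen.1 hrt with rfl | htg
    · exact Or.inl hbx
    · exact Or.inr ⟨b, (hTmem b).2 htg, hbx⟩
  constructor
  · intro x hx
    rcases Finset.mem_filter.1 hx with ⟨hx2, hns⟩
    rcases hf5 x hx2 with h | ⟨y, hy, hyx⟩
    · exact Finset.mem_filter.2 ⟨hx2, h⟩
    · exact (hns y (Finset.mem_filter.2 ⟨hyx, hy, hx2⟩)).elim
  · ext p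
    constructor
    · intro hp
      rcases (Finset.mem_union.1 hp) with h | h
      · rcases Finset.mem_union.1 h with h' | h'
        · rcases Finset.mem_union.1 h' with h'' | h''
          · exact (Finset.mem_filter.1 h'').1
          · exact (Finset.mem_filter.1 h'').1
        · exact (Finset.mem_filter.1 h').1
      · rcases Finset.mem_image.1 h with ⟨x, hx, rfl⟩
        exact (Finset.mem_filter.1 hx).2
    · intro hp
      have hp2v : p.2 ≠ v := by
        intro h
        refine hvsrc p.1 ?_
        have : (p.1, p.2) ∈ E := hp
        rwa [h] at this
      simp only [Finset.mem_union, Finset.mem_filter, Finset.mem_image]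
      rcases hcov p.1 with h | h | h
      · refine Or.inr ⟨p.2, ⟨hf3 p hp (Or.inl h), ?_⟩, ?_⟩
        · have : (p.1, p.2) ∈ E := hp
          rwa [h] at this
        · rw [← h]
      · rcases hcov p.2 with h2 | h2 | h2
        · exact (hp2v h2).elim
        · exact Or.inl (Or.inl (Or.inl ⟨hp, h, h2⟩))
        · exact Or.inl (Or.inr ⟨hp, h, h2⟩)
      · exact Or.inl (Or.inl (Or.inr ⟨hp, h, hf3 p hp (Or.inr h)⟩))

lemma claim1 (hv1 : v ∉ S1) (hv2 : v ∉ S2) (h12 : Disjoint S1 S2)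
    (hcov : ∀ x : Fin n, x = v ∨ x ∈ S1 ∨ x ∈ S2) (w u : ℝ) :
    ∑ E ∈ Finset.univ.filter
        (fun E : Finset (Fin n × Fin n) =>
          DAcyclic E ∧ v ∈ dagSources E ∧ reachSet E v = S2),
      w ^ E.card * u ^ (dagSources E).card
    = ∑ q ∈ ((dagOnS S1 ×ˢ dagOnS S2) ×ˢ ((S1 ×ˢ S2).powerset ×ˢ S2.powerset)).filter
        (fun q => srcIn S2 q.1.2 ⊆ q.2.2),
      w ^ (q.1.1.card + q.1.2.card + q.2.1.card + q.2.2.card)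
        * u ^ (1 + (srcIn S1 q.1.1).card) := by
  have hmemA : ∀ E : Finset (Fin n × Fin n),
      E ∈ Finset.univ.filter (fun E : Finset (Fin n × Fin n) =>
          DAcyclic E ∧ v ∈ dagSources E ∧ reachSet E v = S2)
      ↔ DAcyclic E ∧ (∀ u', (u', v) ∉ E) ∧ reachSet E v = S2 := by
    intro E
    simp only [Finset.mem_filter, Finset.mem_univ, true_and, dagSources]
  have hmemB : ∀ q : (Finset (Fin n × Fin n) × Finset (Fin n × Fin n))
        × (Finset (Fin n × Fin n) × Finset (Fin n)),
      q ∈ ((dagOnS S1 ×ˢ dagOnS S2) ×ˢ ((S1 ×ˢ S2).powerset ×ˢ S2.powerset)).filter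
        (fun q => srcIn S2 q.1.2 ⊆ q.2.2)
      ↔ (DAcyclic q.1.1 ∧ q.1.1 ⊆ S1 ×ˢ S1) ∧ (DAcyclic q.1.2 ∧ q.1.2 ⊆ S2 ×ˢ S2)
          ∧ q.2.1 ⊆ S1 ×ˢ S2 ∧ q.2.2 ⊆ S2 ∧ srcIn S2 q.1.2 ⊆ q.2.2 := by
    intro q
    simp only [Finset.mem_filter, Finset.mem_product, Finset.mem_powerset, dagOnS,
      Finset.mem_univ, true_and]
    tauto
  have hicomp : ∀ E : Finset (Fin n × Fin n), DAcyclic E →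
      (DAcyclic (E.filter (fun p => p.1 ∈ S1 ∧ p.2 ∈ S1))
        ∧ E.filter (fun p => p.1 ∈ S1 ∧ p.2 ∈ S1) ⊆ S1 ×ˢ S1)
      ∧ (DAcyclic (E.filter (fun p => p.1 ∈ S2 ∧ p.2 ∈ S2))
        ∧ E.filter (fun p => p.1 ∈ S2 ∧ p.2 ∈ S2) ⊆ S2 ×ˢ S2)
      ∧ E.filter (fun p => p.1 ∈ S1 ∧ p.2 ∈ S2) ⊆ S1 ×ˢ S2
      ∧ S2.filter (fun x => (v, x) ∈ E) ⊆ S2 := by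
    intro E hacy
    refine ⟨⟨acy_mono hacy (Finset.filter_subset _ _), ?_⟩,
      ⟨acy_mono hacy (Finset.filter_subset _ _), ?_⟩, ?_, Finset.filter_subset _ _⟩ <;>
    · intro p hp
      rcases Finset.mem_filter.1 hp with ⟨_, h1, h2⟩
      exact Finset.mem_product.2 ⟨h1, h2⟩
  refine Finset.sum_nbij'
    (i := fun E => ((E.filter (fun p => p.1 ∈ S1 ∧ p.2 ∈ S1),
                     E.filter (fun p => p.1 ∈ S2 ∧ p.2 ∈ S2)),
                    (E.filter (fun p => p.1 ∈ S1 ∧ p.2 ∈ S2),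
                     S2.filter (fun x => (v, x) ∈ E))))
    (j := fun q => q.1.1 ∪ q.1.2 ∪ q.2.1 ∪ q.2.2.image (fun x => (v, x)))
    ?_ ?_ ?_ ?_ ?_
  · intro E hE
    rcases (hmemA E).1 hE with ⟨hacy, hvs, hreach⟩
    obtain ⟨h1, h2, h3, h4⟩ := hicomp E hacy
    refine (hmemB _).2 ⟨h1, h2, h3, h4, ?_⟩
    exact (ifacts hv1 hv2 h12 hcov E hacy hvs hreach).1
  · intro q hq
    rcases (hmemB q).1 hq with ⟨⟨h1a, h1s⟩, ⟨h2a, h2s⟩, hFs, hHs, hsH⟩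
    obtain ⟨ja, jv, jr, -, -, -, -, -, -⟩ :=
      jfacts hv1 hv2 h12 hcov q.1.1 q.1.2 q.2.1 q.2.2 _ rfl h1a h1s h2a h2s hFs hHs hsH
    exact (hmemA _).2 ⟨ja, by simpa [dagSources] using jv, jr⟩
  · intro E hE
    rcases (hmemA E).1 hE with ⟨hacy, hvs, hreach⟩
    exact (ifacts hv1 hv2 h12 hcov E hacy hvs hreach).2
  · intro q hq
    obtain ⟨⟨E1, E2⟩, F, H⟩ := q
    rcases (hmemB _).1 hq with ⟨⟨h1a, h1s⟩, ⟨h2a, h2s⟩, hFs, hHs, hsH⟩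
    obtain ⟨-, -, -, -, -, hc1, hc2, hc3, hc4⟩ :=
      jfacts hv1 hv2 h12 hcov E1 E2 F H _ rfl h1a h1s h2a h2s hFs hHs hsH
    simp only [Prod.mk.injEq]
    exact ⟨⟨hc1, hc2⟩, hc3, hc4⟩
  · intro E hE
    rcases (hmemA E).1 hE with ⟨hacy, hvs, hreach⟩
    obtain ⟨h1, h2, h3, h4⟩ := hicomp E hacy
    obtain ⟨hsH, hun⟩ := ifacts hv1 hv2 h12 hcov E hacy hvs hreach
    obtain ⟨-, -, -, hsrcE, hcard, -, -, -, -⟩ :=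
      jfacts hv1 hv2 h12 hcov (E.filter (fun p => p.1 ∈ S1 ∧ p.2 ∈ S1))
        (E.filter (fun p => p.1 ∈ S2 ∧ p.2 ∈ S2))
        (E.filter (fun p => p.1 ∈ S1 ∧ p.2 ∈ S2))
        (S2.filter (fun x => (v, x) ∈ E)) E hun.symm h1.1 h1.2 h2.1 h2.2 h3 h4 hsH
    have hnotmem : v ∉ srcIn S1 (E.filter (fun p => p.1 ∈ S1 ∧ p.2 ∈ S1)) :=
      fun hm => hv1 (Finset.mem_filter.1 hm).1
    rw [hcard, hsrcE, Finset.card_insert_of_notMem hnotmem, add_comm _ 1]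

lemma claim2 (w u : ℝ) :
    ∑ q ∈ ((dagOnS S1 ×ˢ dagOnS S2) ×ˢ ((S1 ×ˢ S2).powerset ×ˢ S2.powerset)).filter
        (fun q => srcIn S2 q.1.2 ⊆ q.2.2),
      w ^ (q.1.1.card + q.1.2.card + q.2.1.card + q.2.2.card)
        * u ^ (1 + (srcIn S1 q.1.1).card)
    = u * (1 + w) ^ (S1.card * S2.card)
        * (∑ E1 ∈ dagOnS S1, w ^ E1.card * u ^ (srcIn S1 E1).card)
        * (∑ E2 ∈ dagOnS S2, w ^ (E2.card + (srcIn S2 E2).card)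
            * (1 + w) ^ (S2.card - (srcIn S2 E2).card)) := by
  rw [Finset.sum_filter, Finset.sum_product]
  simp only [Finset.sum_product]
  have key : ∀ E1 E2 : Finset (Fin n × Fin n),
      (∑ F ∈ (S1 ×ˢ S2).powerset, ∑ H ∈ S2.powerset,
        (if srcIn S2 E2 ⊆ H then
          w ^ (E1.card + E2.card + F.card + H.card) * u ^ (1 + (srcIn S1 E1).card) else 0))
      = (w ^ E1.card * u ^ (1 + (srcIn S1 E1).card))
          * ((1 + w) ^ (S1.card * S2.card)
            * (w ^ (E2.card + (srcIn S2 E2).card)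
              * (1 + w) ^ (S2.card - (srcIn S2 E2).card))) := by
    intro E1 E2
    have hsub : srcIn S2 E2 ⊆ S2 := Finset.filter_subset _ _
    have hH : ∀ F : Finset (Fin n × Fin n),
        (∑ H ∈ S2.powerset, (if srcIn S2 E2 ⊆ H then
          w ^ (E1.card + E2.card + F.card + H.card) * u ^ (1 + (srcIn S1 E1).card) else 0))
        = (w ^ (E1.card + E2.card + F.card) * u ^ (1 + (srcIn S1 E1).card))
            * (w ^ (srcIn S2 E2).card * (w + 1) ^ (S2.card - (srcIn S2 E2).card)) := by
      intro F
      rw [← Finset.sum_filter]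
      have hcg : ∀ H ∈ S2.powerset.filter (fun H => srcIn S2 E2 ⊆ H),
          w ^ (E1.card + E2.card + F.card + H.card) * u ^ (1 + (srcIn S1 E1).card)
          = (w ^ (E1.card + E2.card + F.card) * u ^ (1 + (srcIn S1 E1).card)) * w ^ H.card := by
        intro H _
        rw [pow_add]
        ring
      rw [Finset.sum_congr rfl hcg, ← Finset.mul_sum, sum_powerset_between hsub]
    rw [Finset.sum_congr rfl (fun F _ => hH F)]
    have hcg2 : ∀ F ∈ (S1 ×ˢ S2).powerset,
        (w ^ (E1.card + E2.card + F.card) * u ^ (1 + (srcIn S1 E1).card))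
            * (w ^ (srcIn S2 E2).card * (w + 1) ^ (S2.card - (srcIn S2 E2).card))
        = ((w ^ (E1.card + E2.card) * u ^ (1 + (srcIn S1 E1).card))
            * (w ^ (srcIn S2 E2).card * (w + 1) ^ (S2.card - (srcIn S2 E2).card)))
            * w ^ F.card := by
      intro F _
      rw [pow_add, pow_add]
      ring
    rw [Finset.sum_congr rfl hcg2, ← Finset.mul_sum, sum_powerset_pow, Finset.card_product]
    ring
  rw [Finset.sum_congr rfl (fun E1 _ => Finset.sum_congr rfl (fun E2 _ => key E1 E2))]
  rw [← Finset.sum_mul_sum]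
  have hfin : ∀ E1 ∈ dagOnS S1, w ^ E1.card * u ^ (1 + (srcIn S1 E1).card)
      = u * (w ^ E1.card * u ^ (srcIn S1 E1).card) := by
    intro E1 _
    rw [pow_add, pow_one]
    ring
  rw [Finset.sum_congr rfl hfin, ← Finset.mul_sum, ← Finset.mul_sum]
  ring

lemma A_sum (hv1 : v ∉ S1) (hv2 : v ∉ S2) (h12 : Disjoint S1 S2)
    (hcov : ∀ x : Fin n, x = v ∨ x ∈ S1 ∨ x ∈ S2) (w u : ℝ) :
    ∑ E ∈ Finset.univ.filter (fun E : Finset (Fin n × Fin n) =>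
        DAcyclic E ∧ v ∈ dagSources E ∧ reachSet E v = S2),
      w ^ E.card * u ^ (dagSources E).card
    = u * (1 + w) ^ (S1.card * S2.card)
        * dagW (Fin S1.card) (fun m k => w ^ m * u ^ k)
        * dagW (Fin S2.card) (fun m k => w ^ (m + k) * (1 + w) ^ (S2.card - k)) := by
  rw [claim1 hv1 hv2 h12 hcov, claim2,
    sum_dagOnS_fin S1 (fun m k => w ^ m * u ^ k),
    sum_dagOnS_fin S2 (fun m k => w ^ (m + k) * (1 + w) ^ (S2.card - k))]

end Main

lemma hsplit (n : ℕ) (w u : ℝ) :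
    dagW (Fin n) (fun m k => (k : ℝ) * w ^ m * u ^ k)
    = ∑ v : Fin n, ∑ E ∈ Finset.univ.filter (fun E : Finset (Fin n × Fin n) =>
        DAcyclic E ∧ v ∈ dagSources E), w ^ E.card * u ^ (dagSources E).card := by
  unfold dagW
  have h1 : ∀ E ∈ Finset.univ.filter (fun E : Finset (Fin n × Fin n) => Acy E),
      ((gsrc E).card : ℝ) * w ^ E.card * u ^ (gsrc E).card
      = ∑ _v ∈ gsrc E, w ^ E.card * u ^ (gsrc E).card := by
    intro E _
    rw [Finset.sum_const, nsmul_eq_mul]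
    ring
  rw [Finset.sum_congr rfl h1]
  rw [Finset.sum_comm' (s := Finset.univ.filter (fun E : Finset (Fin n × Fin n) => Acy E))
    (t := fun E => gsrc E) (t' := Finset.univ)
    (s' := fun v => (Finset.univ.filter (fun E : Finset (Fin n × Fin n) => Acy E)).filter
      (fun E => v ∈ gsrc E))
    (by
      intro E v
      simp only [Finset.mem_filter, Finset.mem_univ, true_and, and_true])]
  refine Finset.sum_congr rfl fun v _ => ?_
  rw [Finset.filter_filter]
  refine Finset.sum_congr ?_ (fun E hE => by rw [dagSources_eq_gsrc])
  refine Finset.filter_congr fun E _ => ?_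
  rw [dagSources_eq_gsrc]
  exact Iff.rfl

lemma hfib (n : ℕ) (v : Fin n) (w u : ℝ) :
    ∑ E ∈ Finset.univ.filter (fun E : Finset (Fin n × Fin n) =>
        DAcyclic E ∧ v ∈ dagSources E), w ^ E.card * u ^ (dagSources E).card
    = ∑ S2 ∈ (Finset.univ.erase v).powerset,
        ∑ E ∈ Finset.univ.filter (fun E : Finset (Fin n × Fin n) =>
          DAcyclic E ∧ v ∈ dagSources E ∧ reachSet E v = S2),
          w ^ E.card * u ^ (dagSources E).card := by
  rw [← Finset.sum_fiberwise_of_maps_to (g := fun E => reachSet E v)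
    (t := (Finset.univ.erase v).powerset)
    (by
      intro E hE
      rcases Finset.mem_filter.1 hE with ⟨_, hacy, _⟩
      refine Finset.mem_powerset.2 ?_
      intro x hx
      have htg : Relation.TransGen (fun a b => (a, b) ∈ E) v x := by
        simpa [reachSet] using hx
      refine Finset.mem_erase.2 ⟨?_, Finset.mem_univ x⟩
      rintro rfl
      exact hacy x htg)
    (fun E => w ^ E.card * u ^ (dagSources E).card)]
  refine Finset.sum_congr rfl fun S2 _ => ?_
  rw [Finset.filter_filter]
  refine Finset.sum_congr ?_ (fun _ _ => rfl)
  refine Finset.filter_congr fun E _ => ?_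
  tauto

lemma hv_sum (n : ℕ) (hn : 1 ≤ n) (v : Fin n) (w u : ℝ) :
    ∑ E ∈ Finset.univ.filter (fun E : Finset (Fin n × Fin n) =>
        DAcyclic E ∧ v ∈ dagSources E), w ^ E.card * u ^ (dagSources E).card
    = ∑ j ∈ Finset.range n, (((n - 1).choose j : ℕ) : ℝ) *
        (u * (1 + w) ^ ((n - 1 - j) * j)
          * dagW (Fin (n - 1 - j)) (fun m k => w ^ m * u ^ k)
          * dagW (Fin j) (fun m k => w ^ (m + k) * (1 + w) ^ (j - k))) := by
  have hce : (Finset.univ.erase v).card = n - 1 := by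
    rw [Finset.card_erase_of_mem (Finset.mem_univ v), Finset.card_univ, Fintype.card_fin]
  rw [hfib n v w u]
  have hstep : ∀ S2 ∈ (Finset.univ.erase v).powerset,
      (∑ E ∈ Finset.univ.filter (fun E : Finset (Fin n × Fin n) =>
        DAcyclic E ∧ v ∈ dagSources E ∧ reachSet E v = S2),
        w ^ E.card * u ^ (dagSources E).card)
      = u * (1 + w) ^ ((n - 1 - S2.card) * S2.card)
          * dagW (Fin (n - 1 - S2.card)) (fun m k => w ^ m * u ^ k)
          * dagW (Fin S2.card) (fun m k => w ^ (m + k) * (1 + w) ^ (S2.card - k)) := by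
    intro S2 hS2
    have hS2sub : S2 ⊆ Finset.univ.erase v := Finset.mem_powerset.1 hS2
    have hv2 : v ∉ S2 := fun h => (Finset.mem_erase.1 (hS2sub h)).1 rfl
    have hv1 : v ∉ Finset.univ.erase v \ S2 :=
      fun h => (Finset.mem_erase.1 (Finset.mem_sdiff.1 h).1).1 rfl
    have h12 : Disjoint (Finset.univ.erase v \ S2) S2 := Finset.sdiff_disjoint
    have hcov : ∀ x : Fin n, x = v ∨ x ∈ Finset.univ.erase v \ S2 ∨ x ∈ S2 := by
      intro x
      by_cases hxv : x = v
      · exact Or.inl hxv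
      · by_cases hx2 : x ∈ S2
        · exact Or.inr (Or.inr hx2)
        · exact Or.inr (Or.inl (Finset.mem_sdiff.2
            ⟨Finset.mem_erase.2 ⟨hxv, Finset.mem_univ x⟩, hx2⟩))
    have hcS1 : (Finset.univ.erase v \ S2).card = n - 1 - S2.card := by
      rw [Finset.card_sdiff_of_subset hS2sub, hce]
    rw [A_sum hv1 hv2 h12 hcov w u, hcS1]
  rw [Finset.sum_congr rfl hstep, Finset.sum_powerset, hce,
    show n - 1 + 1 = n from by omega]
  refine Finset.sum_congr rfl fun j hj => ?_
  have hconst : ∀ S2 ∈ Finset.powersetCard j (Finset.univ.erase v),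
      u * (1 + w) ^ ((n - 1 - S2.card) * S2.card)
          * dagW (Fin (n - 1 - S2.card)) (fun m k => w ^ m * u ^ k)
          * dagW (Fin S2.card) (fun m k => w ^ (m + k) * (1 + w) ^ (S2.card - k))
      = u * (1 + w) ^ ((n - 1 - j) * j)
          * dagW (Fin (n - 1 - j)) (fun m k => w ^ m * u ^ k)
          * dagW (Fin j) (fun m k => w ^ (m + k) * (1 + w) ^ (j - k)) := by
    intro S2 hS2
    rw [(Finset.mem_powersetCard.1 hS2).2]
  rw [Finset.sum_congr rfl hconst, Finset.sum_const, Finset.card_powersetCard, hce,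
    nsmul_eq_mul]

end Peeling

/-- Coefficient-wise combinatorial form of the peeling-process
identity: for $n \ge 1$,
$\sum_{m,k} k D(n,m,k) w^m u^k = n \sum_{n_1+n_2=n-1} \binom{n-1}{n_1} (1+w)^{n_1 n_2} u
(\sum_{m_1,k_1} D(n_1,m_1,k_1) w^{m_1}u^{k_1})
(\sum_{m_2,k_2} D(n_2,m_2,k_2) w^{m_2+k_2}(1+w)^{n_2-k_2})$. -/
theorem peeling_coefficient_identity (n : ℕ) (hn : 1 ≤ n) (w u : ℝ) :
    ∑' p : ℕ × ℕ, (p.2 : ℝ) * (Dcount n p.1 p.2) * w ^ p.1 * u ^ p.2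
      = n * ∑ n1 ∈ Finset.range n,
          ((n - 1).choose n1 : ℝ) * (1 + w) ^ (n1 * (n - 1 - n1)) * u
            * (∑' q : ℕ × ℕ, (Dcount n1 q.1 q.2 : ℝ) * w ^ q.1 * u ^ q.2)
            * (∑' q : ℕ × ℕ, (Dcount (n - 1 - n1) q.1 q.2 : ℝ) * w ^ (q.1 + q.2)
                * (1 + w) ^ (n - 1 - n1 - q.2)) := by
  open Peeling in
  have hL : (∑' p : ℕ × ℕ, (p.2 : ℝ) * (Dcount n p.1 p.2) * w ^ p.1 * u ^ p.2)
      = dagW (Fin n) (fun m k => (k : ℝ) * w ^ m * u ^ k) := by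
    rw [← tsum_Dcount n (fun m k => (k : ℝ) * w ^ m * u ^ k)]
    exact tsum_congr fun p => by ring
  have hR1 : ∀ n1 : ℕ, (∑' q : ℕ × ℕ, (Dcount n1 q.1 q.2 : ℝ) * w ^ q.1 * u ^ q.2)
      = Peeling.dagW (Fin n1) (fun m k => w ^ m * u ^ k) := by
    intro n1
    rw [← Peeling.tsum_Dcount n1 (fun m k => w ^ m * u ^ k)]
    exact tsum_congr fun p => by ring
  have hR2 : ∀ j : ℕ,
      (∑' q : ℕ × ℕ, (Dcount j q.1 q.2 : ℝ) * w ^ (q.1 + q.2) * (1 + w) ^ (j - q.2))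
      = Peeling.dagW (Fin j) (fun m k => w ^ (m + k) * (1 + w) ^ (j - k)) := by
    intro j
    rw [← Peeling.tsum_Dcount j (fun m k => w ^ (m + k) * (1 + w) ^ (j - k))]
    exact tsum_congr fun p => by ring
  rw [hL]
  simp only [hR1, hR2]
  rw [Peeling.hsplit n w u,
    Finset.sum_congr rfl (fun v _ => Peeling.hv_sum n hn v w u),
    Finset.sum_const, Finset.card_univ, Fintype.card_fin, nsmul_eq_mul]
  congr 1
  rw [← Finset.sum_range_reflect]
  refine Finset.sum_congr rfl fun n1 hn1 => ?_
  have h1 : n1 ≤ n - 1 := by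
    have := Finset.mem_range.1 hn1
    omega
  have h2 : n - 1 - (n - 1 - n1) = n1 := by omega
  rw [Nat.choose_symm h1, h2]
  ring
end

section
/- For all natural numbers n ≥ 1, k ≥ 1, and m ≥ 0, one has k · H(n,m,k) = n · D(n−1, m, k−1), where H(n,m,k) denotes the number of H-structures with n vertices, m edges and k sources, and D(n−1,m,k−1) the number of labelled DAGs on n−1 vertices with m edges and exactly k−1 sources. -/
open Finset

section Perm
variable {N : ℕ}

noncomputable def pe (σ : Equiv.Perm (Fin N)) (E : Finset (Fin N × Fin N)) :
    Finset (Fin N × Fin N) := E.map (σ.prodCongr σ).toEmbedding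

lemma mem_pe {σ : Equiv.Perm (Fin N)} {E : Finset (Fin N × Fin N)} {p : Fin N × Fin N} :
    p ∈ pe σ E ↔ (σ⁻¹ p.1, σ⁻¹ p.2) ∈ E := by
  simp [pe, Finset.mem_map_equiv, Equiv.prodCongr, Equiv.Perm.inv_def, Prod.map]

lemma pe_inv (σ : Equiv.Perm (Fin N)) (E : Finset (Fin N × Fin N)) :
    pe σ⁻¹ (pe σ E) = E := by
  ext p
  simp [mem_pe]

lemma card_pe (σ : Equiv.Perm (Fin N)) (E : Finset (Fin N × Fin N)) :
    (pe σ E).card = E.card := Finset.card_map _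

lemma dacyclic_pe {σ : Equiv.Perm (Fin N)} {E : Finset (Fin N × Fin N)}
    (h : DAcyclic E) : DAcyclic (pe σ E) := by
  intro x hx
  have := Relation.TransGen.lift (f := ⇑σ⁻¹) (p := fun a b => (a, b) ∈ E)
    (fun a b hab => (mem_pe (p := (a, b))).1 hab) _ _ hx
  exact h _ this

lemma mem_sources_pe {σ : Equiv.Perm (Fin N)} {E : Finset (Fin N × Fin N)} {x : Fin N} :
    x ∈ dagSources (pe σ E) ↔ σ⁻¹ x ∈ dagSources E := by
  simp only [dagSources, mem_filter, mem_univ, true_and]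
  constructor
  · intro h u hu
    exact h (σ u) (by simpa [mem_pe] using hu)
  · intro h u hu
    exact h (σ⁻¹ u) (by simpa [mem_pe] using hu)

lemma sources_pe (σ : Equiv.Perm (Fin N)) (E : Finset (Fin N × Fin N)) :
    dagSources (pe σ E) = (dagSources E).map σ.toEmbedding := by
  ext x
  simp [mem_sources_pe, Finset.mem_map_equiv, Equiv.Perm.inv_def]

lemma iso_pe {σ : Equiv.Perm (Fin N)} {E : Finset (Fin N × Fin N)} {w : Fin N}
    (h : ∀ u, (u, w) ∉ E ∧ (w, u) ∉ E) :
    ∀ u, (u, σ w) ∉ pe σ E ∧ (σ w, u) ∉ pe σ E := by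
  intro u
  simp only [mem_pe]
  simpa using ⟨(h (σ⁻¹ u)).1, (h (σ⁻¹ u)).2⟩

lemma swap_map_self {a b : Fin N} {s : Finset (Fin N)} (ha : a ∈ s) (hb : b ∈ s) :
    s.map (Equiv.swap a b).toEmbedding = s := by
  ext x
  rw [Finset.mem_map_equiv]
  rcases eq_or_ne x a with rfl | hxa
  · simp [Equiv.swap_apply_left, ha, hb]
  rcases eq_or_ne x b with rfl | hxb
  · simp [Equiv.swap_apply_right, ha, hb]
  · rw [Equiv.symm_swap, Equiv.swap_apply_of_ne_of_ne hxa hxb]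

lemma pe_swap_pe_swap (a b : Fin N) (E : Finset (Fin N × Fin N)) :
    pe (Equiv.swap a b) (pe (Equiv.swap a b) E) = E := by
  conv_lhs => rw [← Equiv.swap_inv a b]
  exact pe_inv _ _

end Perm

lemma transGen_of_inj {α β : Type*} {f : α → β} (hf : Function.Injective f)
    {r : α → α → Prop} {r' : β → β → Prop}
    (h : ∀ x y, r' x y → ∃ a b, r a b ∧ f a = x ∧ f b = y) {x y : β}
    (hxy : Relation.TransGen r' x y) :
    ∃ a b, Relation.TransGen r a b ∧ f a = x ∧ f b = y := by
  induction hxy with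
  | single hs =>
    obtain ⟨a, b, hr, ha, hb⟩ := h _ _ hs
    exact ⟨a, b, .single hr, ha, hb⟩
  | tail _ hs ih =>
    obtain ⟨a, b, hab, ha, hb⟩ := ih
    obtain ⟨c, d, hcd, hc, hd⟩ := h _ _ hs
    have hbc : b = c := hf (hb.trans hc.symm)
    subst hbc
    exact ⟨a, d, hab.tail hcd, ha, hd⟩

section Emb
variable {N : ℕ}

noncomputable def ex (v : Fin (N + 1)) (D : Finset (Fin N × Fin N)) :
    Finset (Fin (N + 1) × Fin (N + 1)) :=
  D.map ((Fin.succAboveEmb v).prodMap (Fin.succAboveEmb v))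

lemma mem_ex {v : Fin (N + 1)} {D : Finset (Fin N × Fin N)} {p : Fin (N + 1) × Fin (N + 1)} :
    p ∈ ex v D ↔ ∃ q ∈ D, v.succAbove q.1 = p.1 ∧ v.succAbove q.2 = p.2 := by
  simp [ex, Finset.mem_map, Function.Embedding.prodMap, Prod.ext_iff, Prod.map]

noncomputable def res (v : Fin (N + 1)) (E : Finset (Fin (N + 1) × Fin (N + 1))) :
    Finset (Fin N × Fin N) :=
  Finset.univ.filter fun q => (v.succAbove q.1, v.succAbove q.2) ∈ E

lemma mem_res {v : Fin (N + 1)} {E : Finset (Fin (N + 1) × Fin (N + 1))} {q : Fin N × Fin N} :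
    q ∈ res v E ↔ (v.succAbove q.1, v.succAbove q.2) ∈ E := by
  simp [res]

lemma card_ex (v : Fin (N + 1)) (D : Finset (Fin N × Fin N)) :
    (ex v D).card = D.card := Finset.card_map _

lemma res_ex (v : Fin (N + 1)) (D : Finset (Fin N × Fin N)) : res v (ex v D) = D := by
  ext q
  rw [mem_res, mem_ex]
  constructor
  · rintro ⟨q', hq', h1, h2⟩
    have e1 : q'.1 = q.1 := Fin.succAbove_right_injective h1
    have e2 : q'.2 = q.2 := Fin.succAbove_right_injective h2
    rwa [show q' = q from Prod.ext e1 e2] at hq'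
  · intro hq
    exact ⟨q, hq, rfl, rfl⟩

lemma ex_res {v : Fin (N + 1)} {E : Finset (Fin (N + 1) × Fin (N + 1))}
    (h : ∀ u, (u, v) ∉ E ∧ (v, u) ∉ E) : ex v (res v E) = E := by
  ext p
  rw [mem_ex]
  constructor
  · rintro ⟨q, hq, h1, h2⟩
    rw [mem_res] at hq
    rwa [show p = (v.succAbove q.1, v.succAbove q.2) from (Prod.ext h1 h2).symm]
  · intro hp
    have h1 : p.1 ≠ v := by
      rintro rfl
      exact (h p.2).2 (by simpa using hp)
    have h2 : p.2 ≠ v := by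
      rintro rfl
      exact (h p.1).1 (by simpa using hp)
    obtain ⟨a, ha⟩ := Fin.exists_succAbove_eq h1
    obtain ⟨b, hb⟩ := Fin.exists_succAbove_eq h2
    exact ⟨(a, b), by simpa [mem_res, ha, hb] using hp, ha, hb⟩

lemma dacyclic_ex {v : Fin (N + 1)} {D : Finset (Fin N × Fin N)}
    (h : DAcyclic D) : DAcyclic (ex v D) := by
  intro x hx
  obtain ⟨a, b, hab, ha, hb⟩ := transGen_of_inj (Fin.succAbove_right_injective (p := v))
    (r := fun a b => (a, b) ∈ D)
    (fun x y hxy => by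
      obtain ⟨q, hq, h1, h2⟩ := mem_ex.1 hxy
      exact ⟨q.1, q.2, hq, h1, h2⟩) hx
  have e : a = b := Fin.succAbove_right_injective (ha.trans hb.symm)
  subst e
  exact h a hab

lemma dacyclic_res {v : Fin (N + 1)} {E : Finset (Fin (N + 1) × Fin (N + 1))}
    (h : DAcyclic E) : DAcyclic (res v E) := by
  intro x hx
  have := Relation.TransGen.lift (f := v.succAbove)
    (p := fun a b => (a, b) ∈ E) (fun a b hab => (mem_res (v := v) (E := E) (q := (a, b))).1 hab) _ _ hx
  exact h _ this

lemma iso_ex (v : Fin (N + 1)) (D : Finset (Fin N × Fin N)) :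
    ∀ u, (u, v) ∉ ex v D ∧ (v, u) ∉ ex v D := by
  intro u
  constructor <;>
  · intro hm
    obtain ⟨q, _, h1, h2⟩ := mem_ex.1 hm
    first
    | exact Fin.succAbove_ne v q.2 h2
    | exact Fin.succAbove_ne v q.1 h1

lemma sources_ex (v : Fin (N + 1)) (D : Finset (Fin N × Fin N)) :
    dagSources (ex v D) = insert v ((dagSources D).map (Fin.succAboveEmb v)) := by
  ext x
  simp only [dagSources, mem_filter, mem_univ, true_and, Finset.mem_insert,
    Finset.mem_map, Fin.succAboveEmb_apply]
  constructor
  · intro hx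
    rcases eq_or_ne x v with rfl | hxv
    · exact Or.inl rfl
    · obtain ⟨w, hw⟩ := Fin.exists_succAbove_eq hxv
      refine Or.inr ⟨w, fun u hu => ?_, hw⟩
      exact hx (v.succAbove u) (mem_ex.2 ⟨(u, w), hu, rfl, by rw [hw]⟩)
  · rintro (rfl | ⟨w, hw, rfl⟩)
    · exact fun u => (iso_ex x D u).1
    · intro u hu
      obtain ⟨q, hq, h1, h2⟩ := mem_ex.1 hu
      have : q.2 = w := Fin.succAbove_right_injective h2
      exact hw q.1 (by rwa [← this])

lemma not_mem_map_succAbove (v : Fin (N + 1)) (s : Finset (Fin N)) :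
    v ∉ s.map (Fin.succAboveEmb v) := by
  simp only [Finset.mem_map, Fin.succAboveEmb_apply]
  rintro ⟨w, _, hw⟩
  exact Fin.succAbove_ne v w hw

lemma card_sources_ex (v : Fin (N + 1)) (D : Finset (Fin N × Fin N)) :
    (dagSources (ex v D)).card = (dagSources D).card + 1 := by
  rw [sources_ex, Finset.card_insert_of_notMem (not_mem_map_succAbove v _), Finset.card_map]

end Emb

section MinSrc
variable {N : ℕ}

noncomputable def minSrc (E : Finset (Fin (N + 1) × Fin (N + 1))) : Fin (N + 1) :=
  if h : (dagSources E).Nonempty then (dagSources E).min' h else 0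

lemma minSrc_mem {E : Finset (Fin (N + 1) × Fin (N + 1))} (h : (dagSources E).Nonempty) :
    minSrc E ∈ dagSources E := by
  rw [minSrc, dif_pos h]; exact Finset.min'_mem _ _

lemma minSrc_le {E : Finset (Fin (N + 1) × Fin (N + 1))} (h : (dagSources E).Nonempty)
    {u : Fin (N + 1)} (hu : u ∈ dagSources E) : minSrc E ≤ u := by
  rw [minSrc, dif_pos h]; exact Finset.min'_le _ _ hu

lemma minSrc_congr {E E' : Finset (Fin (N + 1) × Fin (N + 1))}
    (h : dagSources E = dagSources E') : minSrc E = minSrc E' := by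
  simp [minSrc, h]

end MinSrc

lemma key (N m k : ℕ) (hk : 1 ≤ k)
    (HS : Finset (Finset (Fin (N + 1) × Fin (N + 1))))
    (DS : Finset (Finset (Fin N × Fin N)))
    (hHS : ∀ E, E ∈ HS ↔ DAcyclic E ∧ E.card = m ∧ (dagSources E).card = k ∧
      ∀ v ∈ dagSources E, (∀ u ∈ dagSources E, v ≤ u) → ∀ u, (u, v) ∉ E ∧ (v, u) ∉ E)
    (hDS : ∀ D, D ∈ DS ↔ DAcyclic D ∧ D.card = m ∧ (dagSources D).card = k - 1) :
    k * HS.card = (N + 1) * DS.card := by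
  classical
  set S : Finset ((_ : Finset (Fin (N + 1) × Fin (N + 1))) × Fin (N + 1)) :=
    HS.sigma fun E => dagSources E with hSdef
  set U : Finset ((_ : Fin (N + 1)) × Finset (Fin (N + 1) × Fin (N + 1))) :=
    (Finset.univ : Finset (Fin (N + 1))).sigma fun v =>
      Finset.univ.filter fun E => DAcyclic E ∧ E.card = m ∧ (dagSources E).card = k ∧
        ∀ u, (u, v) ∉ E ∧ (v, u) ∉ E with hUdef
  set T : Finset ((_ : Fin (N + 1)) × Finset (Fin N × Fin N)) :=
    (Finset.univ : Finset (Fin (N + 1))).sigma fun _ => DS with hTdef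
  have hScard : S.card = k * HS.card := by
    rw [hSdef, Finset.card_sigma,
      Finset.sum_congr rfl fun E hE => ((hHS E).1 hE).2.2.1,
      Finset.sum_const, smul_eq_mul, mul_comm]
  have hTcard : T.card = (N + 1) * DS.card := by
    rw [hTdef, Finset.card_sigma, Finset.sum_const, smul_eq_mul, Finset.card_univ,
      Fintype.card_fin]
  have hSU : S.card = U.card := by
    refine Finset.card_bij'
      (fun p _ => (⟨p.2, pe (Equiv.swap p.2 (minSrc p.1)) p.1⟩ :
        (_ : Fin (N + 1)) × Finset (Fin (N + 1) × Fin (N + 1))))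
      (fun q _ => ⟨pe (Equiv.swap q.1 (minSrc q.2)) q.2, q.1⟩) ?_ ?_ ?_ ?_
    · rintro ⟨E, s⟩ hp
      dsimp only at hp ⊢
      rw [hSdef, Finset.mem_sigma] at hp
      obtain ⟨hE, hs⟩ := hp
      obtain ⟨hac, hcard, hsrc, hmin⟩ := (hHS E).1 hE
      have hne : (dagSources E).Nonempty := ⟨s, hs⟩
      have hv0mem := minSrc_mem hne
      have hiso := hmin _ hv0mem (fun u hu => minSrc_le hne hu)
      have hsrceq : dagSources (pe (Equiv.swap s (minSrc E)) E) = dagSources E := by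
        rw [sources_pe, swap_map_self hs hv0mem]
      rw [hUdef, Finset.mem_sigma]
      refine ⟨Finset.mem_univ _, Finset.mem_filter.2 ⟨Finset.mem_univ _,
        dacyclic_pe hac, by rw [card_pe, hcard], by rw [hsrceq, hsrc], ?_⟩⟩
      have := iso_pe (σ := Equiv.swap s (minSrc E)) hiso
      rwa [Equiv.swap_apply_right] at this
    · rintro ⟨v, E⟩ hq
      dsimp only at hq ⊢
      rw [hUdef, Finset.mem_sigma] at hq
      obtain ⟨hac, hcard, hsrc, hiso⟩ := (Finset.mem_filter.1 hq.2).2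
      have hvsrc : v ∈ dagSources E := by
        simp only [dagSources, Finset.mem_filter, Finset.mem_univ, true_and]
        exact fun u => (hiso u).1
      have hne : (dagSources E).Nonempty := ⟨v, hvsrc⟩
      have hv0mem := minSrc_mem hne
      have hsrceq : dagSources (pe (Equiv.swap v (minSrc E)) E) = dagSources E := by
        rw [sources_pe, swap_map_self hvsrc hv0mem]
      rw [hSdef, Finset.mem_sigma]
      refine ⟨(hHS _).2 ⟨dacyclic_pe hac, by rw [card_pe, hcard], by rw [hsrceq, hsrc], ?_⟩,
        by rw [hsrceq]; exact hvsrc⟩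
      intro w hw hwle
      rw [hsrceq] at hw
      have hw0 : w = minSrc E := le_antisymm
        (hwle _ (by rw [hsrceq]; exact hv0mem)) (minSrc_le hne hw)
      subst hw0
      have := iso_pe (σ := Equiv.swap v (minSrc E)) hiso
      rwa [Equiv.swap_apply_left] at this
    · rintro ⟨E, s⟩ hp
      dsimp only at hp ⊢
      rw [hSdef, Finset.mem_sigma] at hp
      obtain ⟨hE, hs⟩ := hp
      obtain ⟨hac, hcard, hsrc, hmin⟩ := (hHS E).1 hE
      have hne : (dagSources E).Nonempty := ⟨s, hs⟩
      have hv0mem := minSrc_mem hne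
      have hsrceq : dagSources (pe (Equiv.swap s (minSrc E)) E) = dagSources E := by
        rw [sources_pe, swap_map_self hs hv0mem]
      have hmeq : minSrc (pe (Equiv.swap s (minSrc E)) E) = minSrc E := minSrc_congr hsrceq
      rw [hmeq, pe_swap_pe_swap]
    · rintro ⟨v, E⟩ hq
      dsimp only at hq ⊢
      rw [hUdef, Finset.mem_sigma] at hq
      obtain ⟨hac, hcard, hsrc, hiso⟩ := (Finset.mem_filter.1 hq.2).2
      have hvsrc : v ∈ dagSources E := by
        simp only [dagSources, Finset.mem_filter, Finset.mem_univ, true_and]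
        exact fun u => (hiso u).1
      have hne : (dagSources E).Nonempty := ⟨v, hvsrc⟩
      have hv0mem := minSrc_mem hne
      have hsrceq : dagSources (pe (Equiv.swap v (minSrc E)) E) = dagSources E := by
        rw [sources_pe, swap_map_self hvsrc hv0mem]
      have hmeq : minSrc (pe (Equiv.swap v (minSrc E)) E) = minSrc E := minSrc_congr hsrceq
      rw [hmeq, pe_swap_pe_swap]
  have hUT : U.card = T.card := by
    refine Finset.card_bij'
      (fun q _ => (⟨q.1, res q.1 q.2⟩ : (_ : Fin (N + 1)) × Finset (Fin N × Fin N)))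
      (fun r _ => ⟨r.1, ex r.1 r.2⟩) ?_ ?_ ?_ ?_
    · rintro ⟨v, E⟩ hq
      dsimp only at hq ⊢
      rw [hUdef, Finset.mem_sigma] at hq
      dsimp only at hq
      obtain ⟨hac, hcard, hsrc, hiso⟩ := (Finset.mem_filter.1 hq.2).2
      have hex : ex v (res v E) = E := ex_res hiso
      rw [hTdef, Finset.mem_sigma]
      dsimp only
      refine ⟨Finset.mem_univ _, (hDS _).2 ⟨dacyclic_res hac, ?_, ?_⟩⟩
      · have := card_ex v (res v E)
        rw [hex] at this
        omega
      · have := card_sources_ex v (res v E)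
        rw [hex, hsrc] at this
        omega
    · rintro ⟨v, D⟩ hr
      dsimp only at hr ⊢
      rw [hTdef, Finset.mem_sigma] at hr
      obtain ⟨hac, hcard, hsrc⟩ := (hDS _).1 hr.2
      rw [hUdef, Finset.mem_sigma]
      refine ⟨Finset.mem_univ _, Finset.mem_filter.2 ⟨Finset.mem_univ _,
        dacyclic_ex hac, by rw [card_ex, hcard], ?_, iso_ex v D⟩⟩
      rw [card_sources_ex, hsrc]
      omega
    · rintro ⟨v, E⟩ hq
      dsimp only at hq ⊢
      rw [hUdef, Finset.mem_sigma] at hq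
      obtain ⟨hac, hcard, hsrc, hiso⟩ := (Finset.mem_filter.1 hq.2).2
      rw [ex_res hiso]
    · rintro ⟨v, D⟩ hr
      dsimp only
      rw [res_ex]
  rw [← hScard, hSU, hUT, hTcard]


open Classical in
/-- `Hcount n m k` = number of H-structures with `n` vertices, `m` edges and `k`
sources: labelled DAGs in which the source carrying the smallest label among all
sources is isolated (no incident edges, incoming or outgoing). -/
noncomputable def Hcount (n m k : ℕ) : ℕ :=
  (Finset.univ.filter fun E : Finset (Fin n × Fin n) =>
    DAcyclic E ∧ E.card = m ∧ (dagSources E).card = k ∧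
      ∀ v ∈ dagSources E, (∀ u ∈ dagSources E, v ≤ u) →
        ∀ u : Fin n, (u, v) ∉ E ∧ (v, u) ∉ E).card

/-- For $n ≥ 1$, $k ≥ 1$ and $m ≥ 0$:
$k \cdot H(n,m,k) = n \cdot D(n-1,m,k-1)$. -/
theorem H_structure_count (n m k : ℕ) (hn : 1 ≤ n) (hk : 1 ≤ k) :
    k * Hcount n m k = n * Dcount (n - 1) m (k - 1) := by
  obtain ⟨N, rfl⟩ : ∃ N, n = N + 1 := ⟨n - 1, (Nat.succ_pred_eq_of_pos hn).symm⟩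
  rw [Nat.add_sub_cancel, Hcount, Dcount]
  exact key N m k hk _ _ (fun E => by simp [Finset.mem_filter])
    (fun D => by simp [Finset.mem_filter])
end

section
/- Let w > 0 and define H(z,u) := (Set((u−1)z, w) − Set(−z, w)) / Set(−z/(1+w), w) for real z with Set(−z/(1+w), w) ≠ 0. Then for all real u and all real z such that Set(−z,w) ≠ 0 and Set(−z/(1+w), w) ≠ 0, one has 1 − H(z, w/(1+w)) = Set(−z,w)/Set(−z/(1+w),w) ≠ 0 and Set((u−1)z, w)/Set(−z, w) = 1 + H(z,u) / (1 − H(z, w/(1+w))). (This is the sequential decomposition DAG(z,w,u) = 1 + H(z,w,u)/(1 − H(z,w,w/(1+w))).) -/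
/-- `Set(z,w) = Σ_{n ≥ 0} z^n / ((1+w)^{n(n-1)/2} n!)`. -/
noncomputable def SetGF (z w : ℝ) : ℝ :=
  ∑' n : ℕ, z ^ n / ((1 + w) ^ n.choose 2 * n.factorial)

/-- `H(z,u) = (Set((u-1)z,w) - Set(-z,w)) / Set(-z/(1+w),w)`, the graphic generating
function of H-structures. -/
noncomputable def HGF (w z u : ℝ) : ℝ :=
  (SetGF ((u - 1) * z) w - SetGF (-z) w) / SetGF (-(z / (1 + w))) w

/-- Sequential decomposition:
`1 - H(z, w/(1+w)) = Set(-z,w)/Set(-z/(1+w),w) ≠ 0` and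
`DAG(z,w,u) = 1 + H(z,u)/(1 - H(z,w/(1+w)))`. -/
theorem sequential_decomposition (w : ℝ) (hw : 0 < w) (z u : ℝ)
    (h1 : SetGF (-z) w ≠ 0) (h2 : SetGF (-(z / (1 + w))) w ≠ 0) :
    (1 - HGF w z (w / (1 + w)) = SetGF (-z) w / SetGF (-(z / (1 + w))) w
      ∧ 1 - HGF w z (w / (1 + w)) ≠ 0)
    ∧ SetGF ((u - 1) * z) w / SetGF (-z) w
        = 1 + HGF w z u / (1 - HGF w z (w / (1 + w))) := by
  have hw1 : (1 : ℝ) + w ≠ 0 := by positivity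
  have harg : (w / (1 + w) - 1) * z = -(z / (1 + w)) := by
    field_simp
    ring
  have hkey : 1 - HGF w z (w / (1 + w))
      = SetGF (-z) w / SetGF (-(z / (1 + w))) w := by
    rw [HGF, harg]
    generalize SetGF (-(z / (1 + w))) w = a at h2 ⊢
    field_simp
    ring
  have hne : 1 - HGF w z (w / (1 + w)) ≠ 0 := by
    rw [hkey]
    exact div_ne_zero h1 h2
  refine ⟨⟨hkey, hne⟩, ?_⟩
  rw [hkey, HGF]
  generalize SetGF (-(z / (1 + w))) w = a at h2 ⊢
  generalize SetGF (-z) w = b at h1 ⊢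
  field_simp
  ring
end

section
/- Let w > 0 and let f(z) := Set(−z, w) (an entire function of z). Suppose ρ > 0 is a simple zero of f and there exists R > ρ such that f has no zero other than ρ in the closed complex disk of radius R. Then the coefficients d_n := [z^n] (1/f(z)) of the power-series expansion of 1/f around 0 satisfy d_n ~ ρ^{−n} / (ρ · Set(−ρ/(1+w), w)) as n → ∞; equivalently, the number a_n of labelled DAGs on n vertices weighted so that d_n = A_n(w)/((1+w)^{n(n−1)/2} n!) grows with this asymptotic. -/
/-- `Set(z,w)` as an entire function of the complex variable `z`. -/
noncomputable def SetC (z : ℂ) (w : ℝ) : ℂ :=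
  ∑' n : ℕ, z ^ n / ((1 + w : ℂ) ^ n.choose 2 * n.factorial)

open Filter FormalMultilinearSeries

namespace DagAux

lemma denom_cast (w : ℝ) (n : ℕ) :
    ((1 + w : ℂ) ^ n.choose 2 * n.factorial) =
      (((1 + w) ^ n.choose 2 * n.factorial : ℝ) : ℂ) := by
  push_cast; ring

lemma denom_pos {w : ℝ} (hw : 0 < w) (n : ℕ) :
    (0 : ℝ) < (1 + w) ^ n.choose 2 * n.factorial := by
  positivity

lemma denom_ge {w : ℝ} (hw : 0 < w) (n : ℕ) :
    (n.factorial : ℝ) ≤ (1 + w) ^ n.choose 2 * n.factorial := by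
  have h1 : (1 : ℝ) ≤ (1 + w) ^ n.choose 2 := one_le_pow₀ (by linarith)
  have h2 : (0:ℝ) < n.factorial := by positivity
  nlinarith

lemma summable_norm_setC {w : ℝ} (hw : 0 < w) (z : ℂ) :
    Summable (fun n : ℕ => ‖z ^ n / ((1 + w : ℂ) ^ n.choose 2 * n.factorial)‖) := by
  refine Summable.of_nonneg_of_le (fun n => norm_nonneg _) (fun n => ?_)
    (Real.summable_pow_div_factorial ‖z‖)
  rw [denom_cast, norm_div, norm_pow, Complex.norm_real, Real.norm_eq_abs,
    abs_of_pos (denom_pos hw n)]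
  exact div_le_div_of_nonneg_left (by positivity) (by positivity) (denom_ge hw n)

lemma summable_setGF {w : ℝ} (hw : 0 < w) (x : ℝ) :
    Summable (fun n : ℕ => x ^ n / ((1 + w) ^ n.choose 2 * n.factorial)) := by
  refine Summable.of_norm ?_
  refine Summable.of_nonneg_of_le (fun n => norm_nonneg _) (fun n => ?_)
    (Real.summable_pow_div_factorial |x|)
  rw [Real.norm_eq_abs, abs_div, abs_pow, abs_of_pos (denom_pos hw n)]
  exact div_le_div_of_nonneg_left (by positivity) (by positivity) (denom_ge hw n)

lemma setC_ofReal {w : ℝ} (hw : 0 < w) (x : ℝ) :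
    SetC (x : ℂ) w = ((SetGF x w : ℝ) : ℂ) := by
  unfold SetC SetGF
  rw [Complex.ofReal_tsum]
  refine tsum_congr fun n => ?_
  rw [denom_cast]
  push_cast
  ring

lemma setC_hasDerivAt {w : ℝ} (hw : 0 < w) (z : ℂ) :
    HasDerivAt (fun y : ℂ => SetC y w) (SetC (z / (1 + w)) w) z := by
  have hw1 : (0:ℝ) < 1 + w := by linarith
  have hwC : (1 + (w:ℂ)) ≠ 0 := by
    intro h
    have : ((1 + w : ℝ) : ℂ) = 0 := by push_cast; linear_combination h
    exact hw1.ne' (by exact_mod_cast this)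
  -- the summable bound for derivatives on the ball of radius ‖z‖ + 1
  set M : ℝ := ‖z‖ + 1 with hM
  have hM1 : (1:ℝ) ≤ M := by have := norm_nonneg z; simp only [hM]; linarith
  have hM0 : (0:ℝ) < M := by linarith
  set u : ℕ → ℝ := fun n => (n : ℝ) * M ^ (n - 1) / n.factorial with hu_def
  have hu : Summable u := by
    rw [← summable_nat_add_iff 1]
    have : (fun n : ℕ => u (n + 1)) = fun n : ℕ => M ^ n / n.factorial := by
      funext n
      have : ((n:ℝ) + 1) ≠ 0 := by positivity
      simp only [hu_def, Nat.add_sub_cancel, Nat.factorial_succ]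
      push_cast
      field_simp
    rw [this]
    exact Real.summable_pow_div_factorial M
  have key : HasDerivAt (fun y : ℂ => ∑' n : ℕ,
        y ^ n / ((1 + w : ℂ) ^ n.choose 2 * n.factorial))
      (∑' n : ℕ, (n : ℂ) * z ^ (n - 1) / ((1 + w : ℂ) ^ n.choose 2 * n.factorial)) z := by
    refine hasDerivAt_tsum_of_isPreconnected
      (g := fun (n : ℕ) (y : ℂ) => y ^ n / ((1 + w : ℂ) ^ n.choose 2 * n.factorial))
      (g' := fun (n : ℕ) (y : ℂ) => (n : ℂ) * y ^ (n - 1) /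
        ((1 + w : ℂ) ^ n.choose 2 * n.factorial))
      hu (Metric.isOpen_ball (x := (0:ℂ)) (ε := M))
      ((convex_ball (0:ℂ) M).isPreconnected) (fun n y _ => ?_) (fun n y hy => ?_)
      (y₀ := z) ?_ ?_ ?_
    · exact (hasDerivAt_pow n y).div_const _
    · rw [mem_ball_zero_iff] at hy
      simp only [hu_def]
      rw [norm_div, norm_mul, norm_pow, denom_cast, Complex.norm_real, Real.norm_eq_abs,
        abs_of_pos (denom_pos hw n), Complex.norm_natCast]
      refine div_le_div₀ (by positivity) ?_ (by positivity : (0:ℝ) < (n.factorial:ℝ)) (denom_ge hw n)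
      have : ‖y‖ ^ (n-1) ≤ M ^ (n-1) := pow_le_pow_left₀ (norm_nonneg y) hy.le _
      nlinarith [Nat.cast_nonneg (α := ℝ) n]
    · rw [mem_ball_zero_iff]; simp only [hM]; linarith [norm_nonneg z]
    · exact ((summable_norm_setC hw z).of_norm)
    · rw [mem_ball_zero_iff]; simp only [hM]; linarith [norm_nonneg z]
  have hsum : Summable (fun n : ℕ =>
      (n : ℂ) * z ^ (n - 1) / ((1 + w : ℂ) ^ n.choose 2 * n.factorial)) := by
    refine Summable.of_norm_bounded hu fun n => ?_
    simp only [hu_def]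
    rw [norm_div, norm_mul, norm_pow, denom_cast, Complex.norm_real, Real.norm_eq_abs,
      abs_of_pos (denom_pos hw n), Complex.norm_natCast]
    refine div_le_div₀ (by positivity) ?_ (by positivity : (0:ℝ) < (n.factorial:ℝ)) (denom_ge hw n)
    have hz1 : ‖z‖ ≤ M := by simp [hM]
    have : ‖z‖ ^ (n-1) ≤ M ^ (n-1) := pow_le_pow_left₀ (norm_nonneg z) hz1 _
    nlinarith [Nat.cast_nonneg (α := ℝ) n]
  have heq : (∑' n : ℕ, (n : ℂ) * z ^ (n - 1) / ((1 + w : ℂ) ^ n.choose 2 * n.factorial))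
      = SetC (z / (1 + w)) w := by
    rw [Summable.tsum_eq_zero_add hsum]
    simp only [Nat.cast_zero, zero_mul, zero_div, zero_add]
    unfold SetC
    refine tsum_congr fun n => ?_
    have hch : (n + 1).choose 2 = n.choose 2 + n := by
      rw [Nat.choose_succ_succ, Nat.choose_one_right]; ring
    have hfa : ((n+1).factorial : ℂ) = ((n:ℂ) + 1) * n.factorial := by
      rw [Nat.factorial_succ]; push_cast; ring
    have hn1 : ((n:ℂ) + 1) ≠ 0 := by
      have := Nat.cast_ne_zero (R := ℂ).mpr (Nat.succ_ne_zero n)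
      push_cast at this; exact this
    have hfn : ((n.factorial : ℂ)) ≠ 0 := Nat.cast_ne_zero.mpr n.factorial_ne_zero
    rw [hch, hfa, Nat.add_sub_cancel, pow_add, div_pow]
    field_simp
    push_cast
    ring
  rw [← heq]
  exact key

lemma setGF_hasDerivAt {w : ℝ} (hw : 0 < w) (x : ℝ) :
    HasDerivAt (fun t : ℝ => SetGF t w) (SetGF (x / (1 + w)) w) x := by
  have hw1 : (1 + w) ≠ 0 := by positivity
  have h := (setC_hasDerivAt hw (x : ℂ)).real_of_complex
  have h1 : (fun t : ℝ => (SetC (t:ℂ) w).re) = fun t : ℝ => SetGF t w := by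
    funext t; rw [setC_ofReal hw t, Complex.ofReal_re]
  have h2 : (SetC ((x:ℂ) / (1 + (w:ℂ))) w).re = SetGF (x / (1 + w)) w := by
    have : ((x:ℂ) / (1 + (w:ℂ))) = ((x / (1 + w) : ℝ) : ℂ) := by push_cast; ring
    rw [this, setC_ofReal hw, Complex.ofReal_re]
  rw [h1, h2] at h
  exact h

/-- Build a power series on a ball from scalar coefficients and a `HasSum` hypothesis. -/
lemma hasFPowerSeriesOnBall_ofScalars (c : ℕ → ℂ) (F : ℂ → ℂ) (r : NNReal) (hr : 0 < r)
    (h : ∀ z : ℂ, ‖z‖ < r → HasSum (fun n => c n * z ^ n) (F z)) :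
    HasFPowerSeriesOnBall F (FormalMultilinearSeries.ofScalars ℂ c) 0 r := by
  constructor
  · refine ENNReal.le_of_forall_nnreal_lt fun s hs => ?_
    have hs' : (s:ℝ) < r := by exact_mod_cast hs
    have hsum : Summable fun n => c n * ((s:ℝ):ℂ) ^ n := by
      refine (h ((s:ℝ):ℂ) ?_).summable
      rw [Complex.norm_real, Real.norm_eq_abs, abs_of_nonneg s.coe_nonneg]; exact hs'
    have htend : Tendsto (fun n => ‖c n * ((s:ℝ):ℂ) ^ n‖) atTop (nhds 0) := by
      simpa using hsum.tendsto_atTop_zero.norm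
    obtain ⟨C, hC⟩ := htend.bddAbove_range
    refine FormalMultilinearSeries.le_radius_of_bound _ C fun n => ?_
    rw [FormalMultilinearSeries.ofScalars_norm]
    have : ‖c n‖ * (s:ℝ) ^ n = ‖c n * ((s:ℝ):ℂ) ^ n‖ := by
      rw [norm_mul, norm_pow, Complex.norm_real, Real.norm_eq_abs, abs_of_nonneg s.coe_nonneg]
    rw [this]
    exact hC ⟨n, rfl⟩
  · exact_mod_cast hr
  · intro y hy
    rw [EMetric.mem_ball, edist_zero_right] at hy
    have hy' : ‖y‖ < r := by
      rw [← coe_nnnorm]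
      exact_mod_cast hy
    rw [show (fun n => (FormalMultilinearSeries.ofScalars ℂ c n) fun _ => y)
        = fun n => c n * y ^ n from
      funext fun n => by rw [FormalMultilinearSeries.ofScalars_apply_eq, smul_eq_mul], zero_add]
    exact h y hy'

end DagAux

open DagAux

/-- Let `w > 0` and `f(z) = Set(-z,w)`. If `ρ > 0` is a simple zero
of `f`, and `f` has no complex zero other than `ρ` in a closed disk of radius `R > ρ`,
then the coefficients `d_n` of the power-series expansion of `1/f` around `0` satisfy
`d_n ~ ρ^{-n} / (ρ · Set(-ρ/(1+w), w))` as `n → ∞`. -/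
theorem dag_coefficient_asymptotics (w : ℝ) (hw : 0 < w) (ρ : ℝ) (hρ : 0 < ρ)
    (hzero : SetGF (-ρ) w = 0)
    (hsimple : deriv (fun x : ℝ => SetGF (-x) w) ρ ≠ 0)
    (R : ℝ) (hR : ρ < R)
    (honly : ∀ ζ : ℂ, ‖ζ‖ ≤ R → SetC (-ζ) w = 0 → ζ = (ρ : ℂ))
    (d : ℕ → ℝ)
    (hd : ∀ x : ℝ, |x| < ρ → HasSum (fun n : ℕ => d n * x ^ n) (1 / SetGF (-x) w)) :
    Filter.Tendsto (fun n : ℕ => d n * ρ ^ n * (ρ * SetGF (-(ρ / (1 + w))) w))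
      Filter.atTop (nhds 1) := by
  classical
  have hw1 : (0:ℝ) < 1 + w := by linarith
  have hρR : ρ ≤ R := hR.le
  set f : ℂ → ℂ := fun z => SetC (-z) w with hf_def
  have hfderiv : ∀ z : ℂ, HasDerivAt f (-(SetC (-z / (1 + w)) w)) z := by
    intro z
    have h1 := (setC_hasDerivAt hw (-z)).comp z (hasDerivAt_neg z)
    have h2 : SetC (-z / (1 + (w:ℂ))) w * (-1) = -(SetC (-z / (1 + w)) w) := by ring
    rw [h2] at h1
    simpa [hf_def, Function.comp_def] using h1
  have hdiff : Differentiable ℂ f := fun z => (hfderiv z).differentiableAt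
  have fAn : ∀ z : ℂ, AnalyticAt ℂ f z := hdiff.analyticAt
  set B : ℝ := SetGF (-(ρ / (1 + w))) w with hB_def
  have hcast : (-(ρ:ℂ) / (1 + (w:ℂ))) = ((-(ρ / (1 + w)) : ℝ) : ℂ) := by push_cast; ring
  have hfd : HasDerivAt f (-(B:ℂ)) ρ := by
    have h1 := hfderiv (ρ:ℂ)
    rwa [hcast, setC_ofReal hw, ← hB_def] at h1
  have hBne : B ≠ 0 := by
    intro h0
    apply hsimple
    have h2 := (setGF_hasDerivAt hw (-ρ)).comp ρ (hasDerivAt_neg ρ)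
    have h3 : SetGF (-ρ / (1 + w)) w * (-1) = -B := by
      rw [hB_def, neg_div]; ring
    rw [h3] at h2
    have h4 : HasDerivAt (fun x : ℝ => SetGF (-x) w) (-B) ρ := by
      simpa [Function.comp_def] using h2
    rw [h4.deriv, h0, neg_zero]
  have hBC : (B:ℂ) ≠ 0 := Complex.ofReal_ne_zero.mpr hBne
  have hρC : ((ρ:ℂ)) ≠ 0 := Complex.ofReal_ne_zero.mpr hρ.ne'
  have hρnorm : ‖(ρ:ℂ)‖ = ρ := by
    rw [Complex.norm_real, Real.norm_eq_abs, abs_of_pos hρ]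
  have hfρ : f (ρ:ℂ) = 0 := by
    have h1 : (-(ρ:ℂ)) = ((-ρ : ℝ) : ℂ) := by push_cast; ring
    show SetC (-(ρ:ℂ)) w = 0
    rw [h1, setC_ofReal hw, hzero, Complex.ofReal_zero]
  have hfne : ∀ z : ℂ, ‖z‖ ≤ R → z ≠ (ρ:ℂ) → f z ≠ 0 := fun z h1 h2 h0 => h2 (honly z h1 h0)
  have hdsAn : ∀ z : ℂ, ‖z‖ ≤ R → AnalyticAt ℂ (dslope f ρ) z := by
    intro z hz
    rcases eq_or_ne z ((ρ:ℝ):ℂ) with rfl | hne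
    · obtain ⟨p, hp⟩ := fAn ((ρ:ℝ):ℂ)
      exact hp.has_fpower_series_dslope_fslope.analyticAt
    · have h1 : AnalyticAt ℂ (fun y => (f y - f ρ) / (y - ρ)) z :=
        ((fAn z).sub analyticAt_const).div (analyticAt_id.sub analyticAt_const)
          (sub_ne_zero.mpr hne)
      refine h1.congr ?_
      filter_upwards [eventually_ne_nhds hne] with y hy
      rw [dslope_of_ne f hy, slope_def_field]
  have hdρ : dslope f ρ ρ = -(B:ℂ) := by rw [dslope_same, hfd.deriv]
  have hdsne : ∀ z : ℂ, ‖z‖ ≤ R → dslope f ρ z ≠ 0 := by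
    intro z hz
    rcases eq_or_ne z ((ρ:ℝ):ℂ) with rfl | hne
    · rw [hdρ]; exact neg_ne_zero.mpr hBC
    · rw [dslope_of_ne f hne, slope_def_field, hfρ, sub_zero]
      exact div_ne_zero (hfne z hz hne) (sub_ne_zero.mpr hne)
  set H : ℂ → ℂ := fun y => (dslope f ρ y)⁻¹ with hH_def
  have hHAn : ∀ z : ℂ, ‖z‖ ≤ R → AnalyticAt ℂ H z := fun z hz =>
    (hdsAn z hz).inv (hdsne z hz)
  set G : ℂ → ℂ := dslope H ρ with hG_def
  have hρR' : ‖((ρ:ℝ):ℂ)‖ ≤ R := by rw [hρnorm]; exact hρR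
  have hGAn : ∀ z : ℂ, ‖z‖ ≤ R → AnalyticAt ℂ G z := by
    intro z hz
    rcases eq_or_ne z ((ρ:ℝ):ℂ) with rfl | hne
    · obtain ⟨p, hp⟩ := hHAn ((ρ:ℝ):ℂ) hρR'
      exact hp.has_fpower_series_dslope_fslope.analyticAt
    · have h1 : AnalyticAt ℂ (fun y => (H y - H ρ) / (y - ρ)) z :=
        ((hHAn z hz).sub analyticAt_const).div (analyticAt_id.sub analyticAt_const)
          (sub_ne_zero.mpr hne)
      refine h1.congr ?_
      filter_upwards [eventually_ne_nhds hne] with y hy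
      rw [hG_def, dslope_of_ne H hy, slope_def_field]
  have hGval : ∀ z : ℂ, ‖z‖ ≤ R → z ≠ ((ρ:ℝ):ℂ) →
      G z = (f z)⁻¹ + (B:ℂ)⁻¹ / (z - ρ) := by
    intro z hz hne
    have hfz := hfne z hz hne
    have hzρ : z - ((ρ:ℝ):ℂ) ≠ 0 := sub_ne_zero.mpr hne
    have hHz : H z = (z - ρ) / f z := by
      show (dslope f ρ z)⁻¹ = _
      rw [dslope_of_ne f hne, slope_def_field, hfρ, sub_zero, inv_div]
    have hHρ : H ((ρ:ℝ):ℂ) = -(B:ℂ)⁻¹ := by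
      show (dslope f ρ ρ)⁻¹ = _
      rw [hdρ, inv_neg]
    rw [hG_def, dslope_of_ne H hne, slope_def_field, hHz, hHρ]
    field_simp
    ring
  set r' : ℝ := (ρ + R) / 2 with hr'_def
  have hρr' : ρ < r' := by rw [hr'_def]; linarith
  have hr'R : r' < R := by rw [hr'_def]; linarith
  have hr'0 : (0:ℝ) < r' := lt_trans hρ hρr'
  set rN : NNReal := Real.toNNReal r' with hrN_def
  have hrN : (rN : ℝ) = r' := Real.coe_toNNReal _ hr'0.le
  have hGdiff : DifferentiableOn ℂ G (Metric.closedBall 0 (rN : ℝ)) := by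
    intro z hz
    rw [Metric.mem_closedBall, dist_zero_right] at hz
    exact ((hGAn z (le_trans (hz.trans_eq hrN) hr'R.le)).differentiableAt).differentiableWithinAt
  have hrNpos : 0 < rN := by rw [hrN_def]; exact Real.toNNReal_pos.mpr hr'0
  have hq := hGdiff.hasFPowerSeriesOnBall hrNpos
  set q := cauchyPowerSeries G 0 rN with hq_def
  have hρN : ((ρ.toNNReal : NNReal) : ENNReal) < q.radius := by
    refine lt_of_lt_of_le ?_ hq.r_le
    rw [ENNReal.coe_lt_coe, hrN_def]
    exact (Real.toNNReal_lt_toNNReal_iff hr'0).mpr hρr'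
  have hρcoe : ((ρ.toNNReal : NNReal) : ℝ) = ρ := Real.coe_toNNReal _ hρ.le
  have hlittle := q.isLittleO_one_of_lt_radius hρN
  rw [Asymptotics.isLittleO_one_iff] at hlittle
  have hcoeff0 : Filter.Tendsto (fun n => q.coeff n * (ρ:ℂ) ^ n) atTop (nhds 0) := by
    rw [tendsto_zero_iff_norm_tendsto_zero]
    have hl2 : Filter.Tendsto (fun n => ‖q n‖ * ρ ^ n) atTop (nhds 0) := by
      simpa [hρcoe] using hlittle
    refine squeeze_zero (fun n => norm_nonneg _) (fun n => ?_) hl2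
    rw [norm_mul, norm_pow, hρnorm]
    have h1 : ‖q.coeff n‖ ≤ ‖q n‖ := by
      have h2 := (q n).le_opNorm (fun _ => (1:ℂ))
      simp only [norm_one, Finset.prod_const, one_pow, mul_one] at h2
      exact h2
    exact mul_le_mul_of_nonneg_right h1 (by positivity)
  set e : ℕ → ℂ := fun n => (B:ℂ)⁻¹ / (ρ:ℂ) ^ (n+1) + q.coeff n with he_def
  have heSum : ∀ z : ℂ, ‖z‖ < ρ → HasSum (fun n => e n * z ^ n) ((f z)⁻¹) := by
    intro z hz
    have hzρ : z ≠ ((ρ:ℝ):ℂ) := by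
      intro h; rw [h, hρnorm] at hz; exact lt_irrefl _ hz
    have hzR : ‖z‖ ≤ R := le_trans hz.le hρR
    have hfz := hfne z hzR hzρ
    have hzρ' : z - ((ρ:ℝ):ℂ) ≠ 0 := sub_ne_zero.mpr hzρ
    have hρz : ((ρ:ℝ):ℂ) - z ≠ 0 := sub_ne_zero.mpr (Ne.symm hzρ)
    have hgeo : HasSum (fun n => ((B:ℂ)⁻¹ / ρ) * (z / ρ) ^ n)
        (((B:ℂ)⁻¹ / ρ) * (1 - z / ρ)⁻¹) := by
      refine (hasSum_geometric_of_norm_lt_one (ξ := z / ρ) ?_).mul_left ((B:ℂ)⁻¹ / ρ)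
      rw [norm_div, hρnorm, div_lt_one hρ]; exact hz
    have h1 : (fun n => ((B:ℂ)⁻¹ / ρ) * (z / ρ) ^ n)
        = fun n => (B:ℂ)⁻¹ / (ρ:ℂ) ^ (n+1) * z ^ n := by
      funext n
      rw [div_pow, div_mul_div_comm, pow_succ, div_mul_eq_mul_div,
        mul_comm (((ρ:ℝ):ℂ)) ((((ρ:ℝ):ℂ)) ^ n)]
    have h2 : ((B:ℂ)⁻¹ / ρ) * (1 - z / ρ)⁻¹ = (B:ℂ)⁻¹ / (((ρ:ℝ):ℂ) - z) := by
      rw [show (1 : ℂ) - z / ρ = (((ρ:ℝ):ℂ) - z) / ρ from by field_simp,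
        inv_div, div_mul_div_comm, mul_comm ((B:ℂ)⁻¹) (((ρ:ℝ):ℂ)),
        mul_div_mul_left _ _ hρC]
    rw [h1, h2] at hgeo
    have hzball : z ∈ EMetric.ball (0:ℂ) (rN : ENNReal) := by
      change z ∈ Metric.eball (0:ℂ) (rN : ENNReal)
      rw [Metric.mem_eball, edist_zero_right]
      have h3 : ‖z‖₊ < rN := by
        rw [← NNReal.coe_lt_coe, coe_nnnorm, hrN]
        exact lt_trans hz hρr'
      exact_mod_cast h3
    have hqs : HasSum (fun n => q.coeff n * z ^ n) (G z) := by
      have h4 := hq.hasSum hzball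
      rw [zero_add] at h4
      have happ : (fun n => (q n) fun _ => z) = fun n => q.coeff n * z ^ n := by
        funext n; rw [q.apply_eq_pow_smul_coeff, smul_eq_mul]; ring
      rwa [happ] at h4
    have hsum := hgeo.add hqs
    have h3 : (fun n => (B:ℂ)⁻¹ / (ρ:ℂ) ^ (n+1) * z ^ n + q.coeff n * z ^ n)
        = fun n => e n * z ^ n := by funext n; rw [he_def]; ring
    rw [h3] at hsum
    have h4 : (B:ℂ)⁻¹ / (((ρ:ℝ):ℂ) - z) + G z = (f z)⁻¹ := by
      rw [hGval z hzR hzρ]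
      field_simp
      ring
    rwa [h4] at hsum
  have hψ := hasFPowerSeriesOnBall_ofScalars e (fun z => (f z)⁻¹) ρ.toNNReal
      (Real.toNNReal_pos.mpr hρ) (fun z hz => heSum z (by rwa [hρcoe] at hz))
  set φ : ℂ → ℂ := fun z => ∑' n : ℕ, (d n : ℂ) * z ^ n with hφ_def
  have hdsummable : ∀ z : ℂ, ‖z‖ < ρ → Summable (fun n => (d n:ℂ) * z ^ n) := by
    intro z hz
    set x : ℝ := (‖z‖ + ρ) / 2 with hx_def
    have hn0 : (0:ℝ) ≤ ‖z‖ := norm_nonneg z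
    have hx0 : 0 < x := by rw [hx_def]; positivity
    have hzx : ‖z‖ < x := by rw [hx_def]; linarith
    have hxρ : x < ρ := by rw [hx_def]; linarith
    clear_value x
    have hsx := (hd x (by rw [abs_of_pos hx0]; exact hxρ)).summable
    obtain ⟨C, hC⟩ := (hsx.tendsto_atTop_zero.norm).bddAbove_range
    refine Summable.of_norm ?_
    refine Summable.of_nonneg_of_le (fun n => norm_nonneg _) (fun n => ?_)
      ((summable_geometric_of_lt_one (div_nonneg (norm_nonneg z) hx0.le)
        ((div_lt_one hx0).mpr hzx)).mul_left C)
    have key : ‖(d n:ℂ) * z ^ n‖ = ‖d n * x ^ n‖ * (‖z‖ / x) ^ n := by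
      rw [norm_mul, norm_pow, Complex.norm_real, Real.norm_eq_abs, Real.norm_eq_abs,
        abs_mul, abs_pow, abs_of_pos hx0, div_pow]
      field_simp
    rw [key]
    exact mul_le_mul_of_nonneg_right (hC ⟨n, rfl⟩) (by positivity)
  have hφSum : ∀ z : ℂ, ‖z‖ < ρ → HasSum (fun n => (d n:ℂ) * z ^ n) (φ z) :=
    fun z hz => (hdsummable z hz).hasSum
  have hφP := hasFPowerSeriesOnBall_ofScalars (fun n => (d n:ℂ)) φ ρ.toNNReal
      (Real.toNNReal_pos.mpr hρ) (fun z hz => hφSum z (by rwa [hρcoe] at hz))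
  have hreal : ∀ x : ℝ, |x| < ρ → φ ((x:ℝ):ℂ) = (f ((x:ℝ):ℂ))⁻¹ := by
    intro x hx
    have h1 := (hd x hx).mapL Complex.ofRealCLM
    have h2 : (fun n => Complex.ofRealCLM (d n * x ^ n))
        = fun n => (d n:ℂ) * ((x:ℝ):ℂ) ^ n := by
      funext n; simp only [Complex.ofRealCLM_apply]; push_cast; ring
    have h3 : (Complex.ofRealCLM (1 / SetGF (-x) w) : ℂ) = (f ((x:ℝ):ℂ))⁻¹ := by
      have h5 : (-((x:ℝ):ℂ)) = ((-x : ℝ) : ℂ) := by push_cast; ring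
      have h4 : f ((x:ℝ):ℂ) = ((SetGF (-x) w : ℝ) : ℂ) := by
        show SetC (-((x:ℝ):ℂ)) w = _
        rw [h5, setC_ofReal hw]
      rw [h4]
      simp only [Complex.ofRealCLM_apply, one_div]
      push_cast
      ring
    rw [h2, h3] at h1
    have hnx : ‖((x:ℝ):ℂ)‖ < ρ := by rw [Complex.norm_real, Real.norm_eq_abs]; exact hx
    exact (hφSum _ hnx).unique h1
  have hseq : Filter.Tendsto (fun k : ℕ => ((ρ / (k + 2) : ℝ) : ℂ)) atTop
      (nhdsWithin 0 {(0:ℂ)}ᶜ) := by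
    rw [tendsto_nhdsWithin_iff]
    constructor
    · have hr2 : Filter.Tendsto (fun k : ℕ => ρ / ((k:ℝ) + 2)) atTop (nhds 0) :=
        Filter.Tendsto.div_atTop tendsto_const_nhds
          (tendsto_atTop_add_const_right _ 2 tendsto_natCast_atTop_atTop)
      have h6 := (Complex.continuous_ofReal.tendsto 0).comp hr2
      exact h6
    · refine Filter.Eventually.of_forall fun k => ?_
      simp only [Set.mem_compl_iff, Set.mem_singleton_iff]
      intro h
      have h7 : ρ / ((k:ℝ) + 2) = 0 := by exact_mod_cast h
      have hpos : 0 < ρ / ((k:ℝ) + 2) := by positivity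
      linarith
  have hfreq : ∃ᶠ z in nhdsWithin (0:ℂ) {(0:ℂ)}ᶜ, φ z = (f z)⁻¹ := by
    refine hseq.frequently (Filter.Eventually.frequently (Filter.Eventually.of_forall
      fun k => ?_))
    have hx : |ρ / ((k:ℝ) + 2)| < ρ := by
      rw [abs_of_pos (by positivity), div_lt_iff₀ (by positivity)]
      have hk : (0:ℝ) ≤ (k:ℝ) := Nat.cast_nonneg k
      nlinarith
    exact hreal _ hx
  have heqn : φ =ᶠ[nhds (0:ℂ)] fun z => (f z)⁻¹ :=
    ((hφP.analyticAt).frequently_eq_iff_eventually_eq (hψ.analyticAt)).mp hfreq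
  have hPE : FormalMultilinearSeries.ofScalars ℂ (fun n => (d n:ℂ))
      = FormalMultilinearSeries.ofScalars ℂ e :=
    (hφP.hasFPowerSeriesAt.congr heqn).eq_formalMultilinearSeries hψ.hasFPowerSeriesAt
  have hde : ∀ n, (d n : ℂ) = e n :=
    fun n => congrFun (FormalMultilinearSeries.ofScalars_series_injective ℂ ℂ hPE) n
  have hkey : ∀ n : ℕ, ((d n * ρ ^ n * (ρ * B) : ℝ) : ℂ)
      = 1 + q.coeff n * (ρ:ℂ) ^ n * ((ρ:ℂ) * (B:ℂ)) := by
    intro n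
    have h1 : ((d n * ρ ^ n * (ρ * B) : ℝ) : ℂ) = (d n : ℂ) * (ρ:ℂ) ^ n * ((ρ:ℂ)*(B:ℂ)) := by
      push_cast; ring
    rw [h1, hde n, he_def]
    have hpow : ((ρ:ℝ):ℂ) ^ (n+1) ≠ 0 := pow_ne_zero _ hρC
    field_simp
    ring
  have hctend : Filter.Tendsto (fun n : ℕ => (1:ℂ) + q.coeff n * (ρ:ℂ) ^ n * ((ρ:ℂ)*(B:ℂ)))
      atTop (nhds 1) := by
    have h8 := hcoeff0.mul_const ((ρ:ℂ)*(B:ℂ))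
    have h9 := (tendsto_const_nhds (x := (1:ℂ)) (f := atTop (α := ℕ))).add h8
    simpa using h9
  have hfinal := (Complex.continuous_re.tendsto 1).comp hctend
  have hfun : (fun n : ℕ => d n * ρ ^ n * (ρ * B))
      = fun n => ((1:ℂ) + q.coeff n * (ρ:ℂ) ^ n * ((ρ:ℂ)*(B:ℂ))).re := by
    funext n; rw [← hkey n, Complex.ofReal_re]
  have hfinal' : Filter.Tendsto
      (fun n : ℕ => ((1:ℂ) + q.coeff n * (ρ:ℂ) ^ n * ((ρ:ℂ)*(B:ℂ))).re) atTop (nhds 1) := by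
    rw [Complex.one_re] at hfinal
    exact hfinal
  rw [hfun]
  exact hfinal'
end
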